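/- arXiv:2501.13408 — 14 statements merged into one kernel-verified Lean document; each statement's English description precedes it below -/
import Mathlib

section
/- Let (T, Γ) be a Γ-semigroup with zero 0 and T ≠ {0}. Then T is 0-simple if and only if TΓeΓT = T for every nonzero e ∈ T. -/
/-- The set product AΓB = {aγb : a ∈ A, γ ∈ Γ, b ∈ B} for a Γ-semigroup
with multiplication `mul : T → G → T → T`. -/
def gprod {T G : Type*} (mul : T → G → T → T) (A B : Set T) : Set T :=
  {x | ∃ a ∈ A, ∃ γ : G, ∃ b ∈ B, x = mul a γ b}

/-- A nonempty subset B with TΓB ⊆ B. -/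
def IsLeftIdeal {T G : Type*} (mul : T → G → T → T) (B : Set T) : Prop :=
  B.Nonempty ∧ gprod mul Set.univ B ⊆ B

/-- A nonempty subset B with BΓT ⊆ B. -/
def IsRightIdeal {T G : Type*} (mul : T → G → T → T) (B : Set T) : Prop :=
  B.Nonempty ∧ gprod mul B Set.univ ⊆ B

/-- A Γ-two-sided ideal. -/
def IsTwoSidedIdeal {T G : Type*} (mul : T → G → T → T) (B : Set T) : Prop :=
  IsLeftIdeal mul B ∧ IsRightIdeal mul B

/-- z is a zero element: eαz = zαe = z for all e, α. -/
def IsZero {T G : Type*} (mul : T → G → T → T) (z : T) : Prop :=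
  ∀ (e : T) (α : G), mul e α z = z ∧ mul z α e = z

/-- A least Γ-left ideal: every Γ-left ideal contained in it equals it. -/
def IsLeastLeftIdeal {T G : Type*} (mul : T → G → T → T) (H : Set T) : Prop :=
  IsLeftIdeal mul H ∧ ∀ B : Set T, IsLeftIdeal mul B → B ⊆ H → B = H

/-- A least Γ-two-sided ideal. -/
def IsLeastTwoSidedIdeal {T G : Type*} (mul : T → G → T → T) (A : Set T) : Prop :=
  IsTwoSidedIdeal mul A ∧ ∀ B : Set T, IsTwoSidedIdeal mul B → B ⊆ A → B = A

/-- A 0-least Γ-left ideal. -/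
def IsZeroLeastLeftIdeal {T G : Type*} (mul : T → G → T → T) (z : T) (H : Set T) : Prop :=
  IsLeftIdeal mul H ∧ H ≠ {z} ∧
    ∀ B : Set T, IsLeftIdeal mul B → B ⊆ H → B = {z} ∨ B = H

/-- A 0-least Γ-right ideal. -/
def IsZeroLeastRightIdeal {T G : Type*} (mul : T → G → T → T) (z : T) (H : Set T) : Prop :=
  IsRightIdeal mul H ∧ H ≠ {z} ∧
    ∀ B : Set T, IsRightIdeal mul B → B ⊆ H → B = {z} ∨ B = H

/-- A 0-least Γ-two-sided ideal. -/
def IsZeroLeastTwoSidedIdeal {T G : Type*} (mul : T → G → T → T) (z : T) (H : Set T) : Prop :=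
  IsTwoSidedIdeal mul H ∧ H ≠ {z} ∧
    ∀ B : Set T, IsTwoSidedIdeal mul B → B ⊆ H → B = {z} ∨ B = H

/-- 0-simple: TΓT ≠ {0} and the only Γ-two-sided ideals are {0} and T. -/
def IsZeroSimple {T G : Type*} (mul : T → G → T → T) (z : T) : Prop :=
  gprod mul Set.univ Set.univ ≠ {z} ∧
    ∀ B : Set T, IsTwoSidedIdeal mul B → B = {z} ∨ B = Set.univ

/-- e is an idempotent: eαe = e for some α. -/
def IsIdempotent {T G : Type*} (mul : T → G → T → T) (e : T) : Prop :=
  ∃ α : G, mul e α e = e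

/-- The partial order on idempotents: e ≤ f iff exf = fye = e for some x, y ∈ Γ. -/
def IdemLe {T G : Type*} (mul : T → G → T → T) (e f : T) : Prop :=
  ∃ x y : G, mul e x f = e ∧ mul f y e = e

/-- A primitive idempotent: nonzero, and minimal among nonzero idempotents. -/
def IsPrimitiveIdempotent {T G : Type*} (mul : T → G → T → T) (z e : T) : Prop :=
  e ≠ z ∧ IsIdempotent mul e ∧
    ∀ f : T, f ≠ z → IsIdempotent mul f → IdemLe mul f e → f = e

/-- Completely 0-simple: 0-simple with a primitive idempotent. -/
def IsCompletelyZeroSimple {T G : Type*} (mul : T → G → T → T) (z : T) : Prop :=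
  IsZeroSimple mul z ∧ ∃ e : T, IsPrimitiveIdempotent mul z e

/-- Green's relation L: e L f iff {e} ∪ TΓe = {f} ∪ TΓf. -/
def LRel {T G : Type*} (mul : T → G → T → T) (e f : T) : Prop :=
  insert e (gprod mul Set.univ {e}) = insert f (gprod mul Set.univ {f})

/-- Green's relation R: e R f iff {e} ∪ eΓT = {f} ∪ fΓT. -/
def RRel {T G : Type*} (mul : T → G → T → T) (e f : T) : Prop :=
  insert e (gprod mul {e} Set.univ) = insert f (gprod mul {f} Set.univ)

/-- Green's relation D = L ∘ R. -/
def DRel {T G : Type*} (mul : T → G → T → T) (e f : T) : Prop :=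
  ∃ c : T, LRel mul e c ∧ RRel mul c f

/-- The Γ-two-sided ideal generated by e: {e} ∪ TΓe ∪ eΓT ∪ TΓeΓT. -/
def GenTwo {T G : Type*} (mul : T → G → T → T) (e : T) : Set T :=
  {e} ∪ gprod mul Set.univ {e} ∪ gprod mul {e} Set.univ ∪
    gprod mul (gprod mul Set.univ {e}) Set.univ

/-- A Γ-prime ideal. -/
def IsPrimeIdeal {T G : Type*} (mul : T → G → T → T) (Q : Set T) : Prop :=
  IsTwoSidedIdeal mul Q ∧
    ∀ E F : Set T, IsTwoSidedIdeal mul E → IsTwoSidedIdeal mul F →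
      gprod mul E F ⊆ Q → E ⊆ Q ∨ F ⊆ Q

/-- A Γ-two-sided ideal of the Γ-semigroup H (a subset of T closed as an ideal of H). -/
def IsTwoSidedIdealIn {T G : Type*} (mul : T → G → T → T) (H B : Set T) : Prop :=
  B.Nonempty ∧ B ⊆ H ∧ gprod mul H B ⊆ B ∧ gprod mul B H ⊆ B

theorem zeroSimple_iff_TGeGT_eq_univ {T G : Type*} [Nonempty T] [Nonempty G]
    (mul : T → G → T → T)
    (assoc : ∀ (e f g : T) (α β : G), mul (mul e α f) β g = mul e α (mul f β g))
    (z : T) (hz : IsZero mul z) (hT : ∃ x : T, x ≠ z) :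
    IsZeroSimple mul z ↔
      ∀ e : T, e ≠ z →
        gprod mul (gprod mul Set.univ {e}) Set.univ = Set.univ := by
  obtain ⟨t0⟩ := ‹Nonempty T›
  obtain ⟨γ0⟩ := ‹Nonempty G›
  constructor
  · rintro ⟨hne, hideal⟩ e he
    -- TΓT = univ
    have hTTideal : IsTwoSidedIdeal mul (gprod mul Set.univ Set.univ) := by
      refine ⟨⟨⟨mul t0 γ0 t0, t0, trivial, γ0, t0, trivial, rfl⟩, ?_⟩,
        ⟨⟨mul t0 γ0 t0, t0, trivial, γ0, t0, trivial, rfl⟩, ?_⟩⟩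
      · rintro x ⟨s, -, α, y, ⟨a, -, β, b, -, rfl⟩, rfl⟩
        exact ⟨mul s α a, trivial, β, b, trivial, (assoc s a b α β).symm⟩
      · rintro x ⟨y, ⟨a, -, β, b, -, rfl⟩, α, s, -, rfl⟩
        exact ⟨a, trivial, β, mul b α s, trivial, assoc a b s β α⟩
    have hTT : gprod mul Set.univ Set.univ = Set.univ := by
      rcases hideal _ hTTideal with h | h
      · exact absurd h hne
      · exact h
    -- TΓeΓT is a two-sided ideal
    have hAmem : mul (mul t0 γ0 e) γ0 t0 ∈ gprod mul (gprod mul Set.univ {e}) Set.univ :=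
      ⟨mul t0 γ0 e, ⟨t0, trivial, γ0, e, rfl, rfl⟩, γ0, t0, trivial, rfl⟩
    have hAideal : IsTwoSidedIdeal mul (gprod mul (gprod mul Set.univ {e}) Set.univ) := by
      refine ⟨⟨⟨_, hAmem⟩, ?_⟩, ⟨⟨_, hAmem⟩, ?_⟩⟩
      · rintro x ⟨s, -, α, y, ⟨a, ⟨c, -, δ, e', rfl, rfl⟩, β, b, -, rfl⟩, rfl⟩
        refine ⟨mul (mul s α c) δ e', ⟨mul s α c, trivial, δ, e', rfl, rfl⟩, β, b, trivial, ?_⟩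
        simp only [assoc]
      · rintro x ⟨y, ⟨a, ⟨c, -, δ, e', rfl, rfl⟩, β, b, -, rfl⟩, α, s, -, rfl⟩
        refine ⟨mul c δ e', ⟨c, trivial, δ, e', rfl, rfl⟩, β, mul b α s, trivial, ?_⟩
        simp only [assoc]
    rcases hideal _ hAideal with h | h
    · -- the contradiction case: TΓeΓT = {z}
      exfalso
      set J : Set T := {x | gprod mul (gprod mul Set.univ {x}) Set.univ ⊆ {z}} with hJ
      have heJ : e ∈ J := by rw [hJ]; exact h.subset
      have hJideal : IsTwoSidedIdeal mul J := by
        refine ⟨⟨⟨e, heJ⟩, ?_⟩, ⟨⟨e, heJ⟩, ?_⟩⟩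
        · rintro x ⟨s, -, α, y, hy, rfl⟩
          rintro w ⟨a, ⟨c, -, δ, e', rfl, rfl⟩, β, b, -, rfl⟩
          have heq : mul (mul c δ (mul s α y)) β b
              = mul (mul (mul c δ s) α y) β b := by simp only [assoc]
          rw [heq]
          exact hy ⟨mul (mul c δ s) α y, ⟨mul c δ s, trivial, α, y, rfl, rfl⟩, β, b, trivial, rfl⟩
        · rintro x ⟨y, hy, α, s, -, rfl⟩
          rintro w ⟨a, ⟨c, -, δ, e', rfl, rfl⟩, β, b, -, rfl⟩
          have heq : mul (mul c δ (mul y α s)) β b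
              = mul (mul c δ y) α (mul s β b) := by simp only [assoc]
          rw [heq]
          exact hy ⟨mul c δ y, ⟨c, trivial, δ, y, rfl, rfl⟩, α, mul s β b, trivial, rfl⟩
      rcases hideal _ hJideal with hJz | hJu
      · exact he (by rw [← Set.mem_singleton_iff, ← hJz]; exact heJ)
      · -- every x is in J, so TΓT = {z}
        apply hne
        apply Set.eq_singleton_iff_unique_mem.mpr
        refine ⟨⟨z, trivial, γ0, z, trivial, ((hz z γ0).1).symm⟩, ?_⟩
        rintro x ⟨a, -, α, b, -, rfl⟩
        have ha : a ∈ gprod mul Set.univ Set.univ := by rw [hTT]; trivial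
        obtain ⟨c, -, β, d, -, rfl⟩ := ha
        have hdJ : d ∈ J := by rw [hJu]; trivial
        exact hdJ ⟨mul c β d, ⟨c, trivial, β, d, rfl, rfl⟩, α, b, trivial, rfl⟩
    · exact h
  · intro h
    constructor
    · -- TΓT ≠ {z}
      obtain ⟨x, hx⟩ := hT
      intro hTT
      apply hx
      have hxmem : x ∈ gprod mul (gprod mul Set.univ {x}) Set.univ := by
        rw [h x hx]; trivial
      obtain ⟨a, ⟨c, -, δ, e', rfl, rfl⟩, β, b, -, hxe⟩ := hxmem
      have : mul (mul c δ e') β b ∈ gprod mul Set.univ Set.univ :=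
        ⟨mul c δ e', trivial, β, b, trivial, rfl⟩
      rw [hTT] at this
      rw [hxe]; exact this
    · rintro B ⟨⟨⟨b0, hb0⟩, hL⟩, ⟨-, hR⟩⟩
      by_cases hB : B = {z}
      · exact Or.inl hB
      · right
        have : ∃ e ∈ B, e ≠ z := by
          by_contra hc
          push_neg at hc
          apply hB
          apply Set.eq_singleton_iff_unique_mem.mpr
          refine ⟨?_, hc⟩
          have := hc b0 hb0
          rwa [this] at hb0
        obtain ⟨e, heB, he⟩ := this
        apply Set.eq_univ_of_univ_subset
        rw [← h e he]
        rintro x ⟨a, ⟨c, -, δ, e', rfl, rfl⟩, β, b, -, rfl⟩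
        have h1 : mul e' β b ∈ B := hR ⟨e', heB, β, b, trivial, rfl⟩
        have h2 : mul c δ (mul e' β b) ∈ B := hL ⟨c, trivial, δ, _, h1, rfl⟩
        rwa [assoc]
end

section
/- Let (T, Γ) be a Γ-semigroup and let H be a least Γ-left ideal of T (a Γ-left ideal such that every Γ-left ideal of T contained in H equals H). Then for any e ∈ Γ and f ∈ T, the set Hef = {hef : h ∈ H} is a least Γ-left ideal of T. -/
theorem leastLeftIdeal_mul {T G : Type*} [Nonempty T] [Nonempty G]
    (mul : T → G → T → T)
    (assoc : ∀ (e f g : T) (α β : G), mul (mul e α f) β g = mul e α (mul f β g))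
    (H : Set T) (hH : IsLeastLeftIdeal mul H) (e : G) (f : T) :
    IsLeastLeftIdeal mul {x | ∃ h ∈ H, x = mul h e f} := by
  obtain ⟨⟨⟨h0, h0H⟩, hclosed⟩, hleast⟩ := hH
  constructor
  · constructor
    · exact ⟨mul h0 e f, h0, h0H, rfl⟩
    · rintro x ⟨a, -, γ, b, ⟨h, hh, rfl⟩, rfl⟩
      exact ⟨mul a γ h, hclosed ⟨a, trivial, γ, h, hh, rfl⟩, (assoc a h f γ e).symm⟩
  · rintro B ⟨⟨b0, hb0⟩, hBclosed⟩ hBsub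
    have hC : IsLeftIdeal mul {h ∈ H | mul h e f ∈ B} := by
      constructor
      · obtain ⟨h, hh, rfl⟩ := hBsub hb0
        exact ⟨h, hh, hb0⟩
      · rintro x ⟨a, -, γ, c, ⟨hcH, hcB⟩, rfl⟩
        refine ⟨hclosed ⟨a, trivial, γ, c, hcH, rfl⟩, ?_⟩
        rw [assoc]
        exact hBclosed ⟨a, trivial, γ, mul c e f, hcB, rfl⟩
    have hCeq := hleast _ hC (Set.sep_subset _ _)
    apply Set.Subset.antisymm hBsub
    rintro x ⟨h, hh, rfl⟩
    have : h ∈ {h ∈ H | mul h e f ∈ B} := by rw [hCeq]; exact hh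
    exact this.2
end

section
/- Let (T, Γ) be a Γ-semigroup and let A be a least Γ-two-sided ideal of T (a Γ-two-sided ideal such that every Γ-two-sided ideal of T contained in A equals A). Then A is a simple Γ-semigroup: every nonempty subset B ⊆ A satisfying AΓB ⊆ B and BΓA ⊆ B equals A. -/
theorem leastTwoSidedIdeal_is_simple {T G : Type*} [Nonempty T] [Nonempty G]
    (mul : T → G → T → T)
    (assoc : ∀ (e f g : T) (α β : G), mul (mul e α f) β g = mul e α (mul f β g))
    (A : Set T) (hA : IsLeastTwoSidedIdeal mul A) :
    ∀ B : Set T, B ⊆ A → B.Nonempty →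
      gprod mul A B ⊆ B → gprod mul B A ⊆ B → B = A := by
  intro B hBA hBne hAB hBA'
  obtain ⟨⟨⟨hAne, hAleft⟩, ⟨_, hAright⟩⟩, hleast⟩ := hA
  -- C = (AΓB)ΓA
  set C : Set T := gprod mul (gprod mul A B) A with hC
  have hCB : C ⊆ B := by
    rintro x ⟨ab, ⟨a, ha, α, b, hb, rfl⟩, β, a', ha', rfl⟩
    exact hBA' ⟨mul a α b, hAB ⟨a, ha, α, b, hb, rfl⟩, β, a', ha', rfl⟩
  have hCA : C ⊆ A := hCB.trans hBA
  have hCne : C.Nonempty := by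
    obtain ⟨a, ha⟩ := hAne
    obtain ⟨b, hb⟩ := hBne
    obtain ⟨γ⟩ := ‹Nonempty G›
    exact ⟨mul (mul a γ b) γ a, ⟨mul a γ b, ⟨a, ha, γ, b, hb, rfl⟩, γ, a, ha, rfl⟩⟩
  have hCideal : IsTwoSidedIdeal mul C := by
    refine ⟨⟨hCne, ?_⟩, ⟨hCne, ?_⟩⟩
    · rintro x ⟨t, -, γ, c, ⟨ab, ⟨a, ha, α, b, hb, rfl⟩, β, a', ha', rfl⟩, rfl⟩
      refine ⟨mul (mul t γ a) α b, ⟨mul t γ a,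
        hAleft ⟨t, Set.mem_univ t, γ, a, ha, rfl⟩, α, b, hb, rfl⟩, β, a', ha', ?_⟩
      rw [assoc, assoc, assoc]
    · rintro x ⟨c, ⟨ab, hab, β, a', ha', rfl⟩, γ, t, -, rfl⟩
      exact ⟨ab, hab, β, mul a' γ t,
        hAright ⟨a', ha', γ, t, Set.mem_univ t, rfl⟩, (assoc ..)⟩
  have := hleast C hCideal hCA
  exact hBA.antisymm (this ▸ hCB)
end

section
/- Let (T, Γ) be a Γ-semigroup with zero 0 and let H be a 0-least Γ-left ideal of T with HΓH ≠ {0}. Then for every nonzero element e ∈ H, TΓe = H. -/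
theorem zeroLeastLeftIdeal_eq_TGe {T G : Type*} [Nonempty T] [Nonempty G]
    (mul : T → G → T → T)
    (assoc : ∀ (e f g : T) (α β : G), mul (mul e α f) β g = mul e α (mul f β g))
    (z : T) (hz : IsZero mul z)
    (H : Set T) (hH : IsZeroLeastLeftIdeal mul z H)
    (hHH : gprod mul H H ≠ {z}) :
    ∀ e ∈ H, e ≠ z → gprod mul Set.univ {e} = H := by
  obtain ⟨⟨hHne, hHideal⟩, hHnz, hmin⟩ := hH
  obtain ⟨h0, hh0⟩ := hHne
  have γ0 : G := Classical.arbitrary G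
  have hzH : z ∈ H := by
    have : mul z γ0 h0 ∈ H := hHideal ⟨z, trivial, γ0, h0, hh0, rfl⟩
    rwa [(hz h0 γ0).2] at this
  set A := {x ∈ H | ∀ (t : T) (α : G), mul t α x = z} with hA
  have hAideal : IsLeftIdeal mul A := by
    constructor
    · exact ⟨z, hzH, fun t α => (hz t α).1⟩
    · rintro x ⟨a, -, γ, b, hb, rfl⟩
      refine ⟨hHideal ⟨a, trivial, γ, b, hb.1, rfl⟩, fun t α => ?_⟩
      rw [← assoc]
      exact hb.2 _ _
  have hAsub : A ⊆ H := fun x hx => hx.1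
  rcases hmin A hAideal hAsub with hAz | hAH
  · intro e he hez
    have heA : e ∉ A := fun h => hez (by rwa [hAz, Set.mem_singleton_iff] at h)
    have hL : IsLeftIdeal mul (gprod mul Set.univ {e}) := by
      constructor
      · exact ⟨z, z, trivial, γ0, e, rfl, ((hz e γ0).2).symm⟩
      · rintro x ⟨a, -, γ, b, hb, rfl⟩
        obtain ⟨c, -, δ, d, hd, rfl⟩ := hb
        exact ⟨mul a γ c, trivial, δ, d, hd, (assoc a c d γ δ).symm⟩
    have hsub : gprod mul Set.univ {e} ⊆ H := by
      rintro x ⟨a, -, γ, b, hb, rfl⟩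
      have hbe : b = e := hb
      exact hHideal ⟨a, trivial, γ, b, hbe.symm ▸ he, rfl⟩
    rcases hmin _ hL hsub with h1 | h1
    · exfalso
      apply heA
      refine ⟨he, fun t α => ?_⟩
      have : mul t α e ∈ ({z} : Set T) := h1 ▸ ⟨t, trivial, α, e, rfl, rfl⟩
      exact this
    · exact h1
  · exfalso
    apply hHH
    ext x
    simp only [Set.mem_singleton_iff]
    constructor
    · rintro ⟨a, ha, γ, b, hb, rfl⟩
      have hbA : b ∈ A := hAH ▸ hb
      exact hbA.2 a γ
    · intro hx
      rw [hx]
      exact ⟨z, hzH, γ0, z, hzH, ((hz z γ0).1).symm⟩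
end

section
/- Let (T, Γ) be a Γ-semigroup with zero 0, let H be a 0-least Γ-left ideal of T, and let e ∈ Γ, f ∈ T. Then the set Hef = {hef : h ∈ H} is either {0} or a 0-least Γ-left ideal of T. -/
theorem zeroLeastLeftIdeal_mul {T G : Type*} [Nonempty T] [Nonempty G]
    (mul : T → G → T → T)
    (assoc : ∀ (e f g : T) (α β : G), mul (mul e α f) β g = mul e α (mul f β g))
    (z : T) (hz : IsZero mul z)
    (H : Set T) (hH : IsZeroLeastLeftIdeal mul z H) (e : G) (f : T) :
    {x | ∃ h ∈ H, x = mul h e f} = {z} ∨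
      IsZeroLeastLeftIdeal mul z {x | ∃ h ∈ H, x = mul h e f} := by

  classical
  set K : Set T := {x | ∃ h ∈ H, x = mul h e f} with hK
  by_cases hKz : K = {z}
  · exact Or.inl hKz
  · right
    obtain ⟨⟨hHne, hHcl⟩, hHnz, hHmin⟩ := hH
    obtain ⟨γ⟩ := ‹Nonempty G›
    -- z ∈ H
    have hzH : z ∈ H := by
      obtain ⟨h, hh⟩ := hHne
      have : mul z γ h ∈ H := hHcl ⟨z, Set.mem_univ _, γ, h, hh, rfl⟩
      rwa [(hz h γ).2] at this
    have hzK : z ∈ K := ⟨z, hzH, ((hz f e).2).symm⟩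
    -- K is a left ideal
    have hKideal : IsLeftIdeal mul K := by
      refine ⟨⟨z, hzK⟩, ?_⟩
      rintro x ⟨t, -, α, b, ⟨h, hh, rfl⟩, rfl⟩
      exact ⟨mul t α h, hHcl ⟨t, Set.mem_univ _, α, h, hh, rfl⟩, (assoc t h f α e).symm⟩
    refine ⟨hKideal, hKz, ?_⟩
    intro B hB hBK
    -- z ∈ B
    have hzB : z ∈ B := by
      obtain ⟨b, hb⟩ := hB.1
      have : mul z γ b ∈ B := hB.2 ⟨z, Set.mem_univ _, γ, b, hb, rfl⟩
      rwa [(hz b γ).2] at this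
    set A : Set T := {h | h ∈ H ∧ mul h e f ∈ B} with hA
    have hAideal : IsLeftIdeal mul A := by
      refine ⟨⟨z, hzH, by rwa [(hz f e).2]⟩, ?_⟩
      rintro x ⟨t, -, α, a, ⟨haH, haB⟩, rfl⟩
      refine ⟨hHcl ⟨t, Set.mem_univ _, α, a, haH, rfl⟩, ?_⟩
      rw [assoc t a f α e]
      exact hB.2 ⟨t, Set.mem_univ _, α, mul a e f, haB, rfl⟩
    have hAH : A ⊆ H := fun a ha => ha.1
    rcases hHmin A hAideal hAH with hAz | hAH'
    · left
      apply Set.eq_singleton_iff_nonempty_unique_mem.mpr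
      refine ⟨⟨z, hzB⟩, ?_⟩
      intro b hb
      obtain ⟨h, hh, rfl⟩ := hBK hb
      have : h ∈ A := ⟨hh, hb⟩
      rw [hAz] at this
      rw [Set.mem_singleton_iff] at this
      rw [this, (hz f e).2]
    · right
      apply Set.Subset.antisymm hBK
      rintro x ⟨h, hh, rfl⟩
      have : h ∈ A := hAH' ▸ hh
      exact this.2
end

section
/- Let (T, Γ) be a Γ-semigroup with zero 0 and let H be a 0-least Γ-two-sided ideal of T. Then either HΓH = {0}, or H is a 0-simple Γ-semigroup, i.e., HΓH ≠ {0} and every nonempty subset B ⊆ H satisfying HΓB ⊆ B and BΓH ⊆ B equals {0} or H. -/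
theorem zeroLeastTwoSidedIdeal_zero_or_zeroSimple {T G : Type*} [Nonempty T] [Nonempty G]
    (mul : T → G → T → T)
    (assoc : ∀ (e f g : T) (α β : G), mul (mul e α f) β g = mul e α (mul f β g))
    (z : T) (hz : IsZero mul z)
    (H : Set T) (hH : IsZeroLeastTwoSidedIdeal mul z H) :
    gprod mul H H = {z} ∨
      (gprod mul H H ≠ {z} ∧
        ∀ B : Set T, B ⊆ H → B.Nonempty →
          gprod mul H B ⊆ B → gprod mul B H ⊆ B → B = {z} ∨ B = H) := by
  obtain ⟨⟨⟨hHne, hHl⟩, ⟨-, hHr⟩⟩, hHnz, hHmin⟩ := hH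
  obtain ⟨γ0⟩ := ‹Nonempty G›
  -- z ∈ H
  obtain ⟨h0, h0H⟩ := hHne
  have zH : z ∈ H := by
    have : mul z γ0 h0 ∈ H := hHl ⟨z, Set.mem_univ z, γ0, h0, h0H, rfl⟩
    rwa [(hz h0 γ0).2] at this
  by_cases hHH : gprod mul H H = {z}
  · exact Or.inl hHH
  right
  refine ⟨hHH, ?_⟩
  -- H² = H
  have hHHid : IsTwoSidedIdeal mul (gprod mul H H) := by
    refine ⟨⟨⟨z, z, zH, γ0, z, zH, ((hz z γ0).1).symm⟩, ?_⟩,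
            ⟨⟨z, z, zH, γ0, z, zH, ((hz z γ0).1).symm⟩, ?_⟩⟩
    · rintro x ⟨t, -, α, y, ⟨a, aH, γ, b, bH, rfl⟩, rfl⟩
      exact ⟨mul t α a, hHl ⟨t, Set.mem_univ t, α, a, aH, rfl⟩, γ, b, bH, (assoc t a b α γ).symm⟩
    · rintro x ⟨y, ⟨a, aH, γ, b, bH, rfl⟩, α, t, -, rfl⟩
      exact ⟨a, aH, γ, mul b α t, hHr ⟨b, bH, α, t, Set.mem_univ t, rfl⟩, assoc a b t γ α⟩
  have hHHsub : gprod mul H H ⊆ H := by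
    rintro x ⟨a, aH, γ, b, bH, rfl⟩
    exact hHl ⟨a, Set.mem_univ a, γ, b, bH, rfl⟩
  have hH2 : gprod mul H H = H := (hHmin _ hHHid hHHsub).resolve_left hHH
  intro B hBH hBne hHB hBH'
  -- K = HΓBΓH
  set K : Set T := gprod mul (gprod mul H B) H with hK
  obtain ⟨b0, b0B⟩ := hBne
  have zK : z ∈ K := by
    refine ⟨mul z γ0 b0, ⟨z, zH, γ0, b0, b0B, rfl⟩, γ0, z, zH, ?_⟩
    rw [(hz b0 γ0).2, (hz z γ0).1]
  have hKB : K ⊆ B := by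
    rintro x ⟨y, ⟨a, aH, γ, b, bB, rfl⟩, δ, c, cH, rfl⟩
    exact hBH' ⟨mul a γ b, hHB ⟨a, aH, γ, b, bB, rfl⟩, δ, c, cH, rfl⟩
  have hKid : IsTwoSidedIdeal mul K := by
    refine ⟨⟨⟨z, zK⟩, ?_⟩, ⟨⟨z, zK⟩, ?_⟩⟩
    · rintro x ⟨t, -, α, y, ⟨y', ⟨a, aH, γ, b, bB, rfl⟩, δ, c, cH, rfl⟩, rfl⟩
      refine ⟨mul (mul t α a) γ b, ⟨mul t α a, hHl ⟨t, Set.mem_univ t, α, a, aH, rfl⟩,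
        γ, b, bB, rfl⟩, δ, c, cH, ?_⟩
      rw [assoc, assoc, assoc]
    · rintro x ⟨y, ⟨y', yHB, δ, c, cH, rfl⟩, α, t, -, rfl⟩
      exact ⟨y', yHB, δ, mul c α t, hHr ⟨c, cH, α, t, Set.mem_univ t, rfl⟩, assoc y' c t δ α⟩
  rcases hHmin K hKid (hKB.trans hBH) with hK0 | hKH
  · -- K = {z}; consider Z = {a ∈ H : HΓaΓH = {z}}
    set Z : Set T := {a | a ∈ H ∧ ∀ h ∈ H, ∀ h' ∈ H, ∀ γ δ : G, mul (mul h γ a) δ h' = z}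
      with hZ
    have zZ : z ∈ Z := ⟨zH, fun h _ h' _ γ δ => by rw [(hz h γ).1, (hz h' δ).2]⟩
    have hZid : IsTwoSidedIdeal mul Z := by
      refine ⟨⟨⟨z, zZ⟩, ?_⟩, ⟨⟨z, zZ⟩, ?_⟩⟩
      · rintro x ⟨t, -, α, a, ⟨aH, ha⟩, rfl⟩
        refine ⟨hHl ⟨t, Set.mem_univ t, α, a, aH, rfl⟩, fun h hH' h' h'H γ δ => ?_⟩
        rw [← assoc]
        exact ha _ (hHr ⟨h, hH', γ, t, Set.mem_univ t, rfl⟩) _ h'H α δ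
      · rintro x ⟨a, ⟨aH, ha⟩, α, t, -, rfl⟩
        refine ⟨hHr ⟨a, aH, α, t, Set.mem_univ t, rfl⟩, fun h hH' h' h'H γ δ => ?_⟩
        rw [← assoc, assoc _ _ _ α]
        exact ha _ hH' _ (hHl ⟨t, Set.mem_univ t, δ, h', h'H, rfl⟩) γ α
    have hZsub : Z ⊆ H := fun a ha => ha.1
    rcases hHmin Z hZid hZsub with hZ0 | hZH
    · -- Z = {z} and B ⊆ Z
      have hBZ : B ⊆ Z := by
        intro b bB
        refine ⟨hBH bB, fun h hH' h' h'H γ δ => ?_⟩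
        have : mul (mul h γ b) δ h' ∈ K := ⟨mul h γ b, ⟨h, hH', γ, b, bB, rfl⟩, δ, h', h'H, rfl⟩
        rw [hK0] at this
        exact this
      left
      rw [hZ0] at hBZ
      exact Set.Subset.antisymm hBZ (Set.singleton_subset_iff.mpr (hBZ b0B ▸ b0B))
    · -- Z = H gives H = {z}, contradiction
      exfalso
      apply hHnz
      have hHz : H ⊆ {z} := by
        intro x xH
        rw [← hH2] at xH
        obtain ⟨a, aH, γ, b, bH, rfl⟩ := xH
        rw [← hH2] at aH
        obtain ⟨h, hH', γ', c, cH, rfl⟩ := aH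
        have cZ : c ∈ Z := hZH ▸ cH
        exact cZ.2 h hH' b bH γ' γ
      exact Set.Subset.antisymm hHz (Set.singleton_subset_iff.mpr zH)
  · -- K = H gives B = H
    right
    exact Set.Subset.antisymm hBH (hKH ▸ hKB)
end

section
/- Let (T, Γ) be a Γ-semigroup with zero 0 and let H be a 0-least Γ-two-sided ideal of T that contains at least one 0-least Γ-left ideal of T. Then H equals the union of all 0-least Γ-left ideals of T contained in H. -/
/-- The zero lies in every Γ-left ideal. -/
lemma zero_mem_leftIdeal {T G : Type*} [Nonempty G] (mul : T → G → T → T)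
    (z : T) (hz : IsZero mul z) (B : Set T) (hB : IsLeftIdeal mul B) : z ∈ B := by
  obtain ⟨⟨b, hb⟩, hcl⟩ := hB
  obtain ⟨γ⟩ := ‹Nonempty G›
  have h : mul z γ b ∈ B := hcl ⟨z, Set.mem_univ z, γ, b, hb, rfl⟩
  rwa [(hz b γ).2] at h

/-- If `L` is a 0-least Γ-left ideal, then `Lγa` is `{z}` or a 0-least Γ-left ideal. -/
lemma Lgammaa_alt {T G : Type*} [Nonempty G] (mul : T → G → T → T)
    (assoc : ∀ (e f g : T) (α β : G), mul (mul e α f) β g = mul e α (mul f β g))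
    (z : T) (hz : IsZero mul z) (L : Set T) (hL : IsZeroLeastLeftIdeal mul z L)
    (γ : G) (a : T) :
    {y | ∃ x ∈ L, y = mul x γ a} = {z} ∨
      IsZeroLeastLeftIdeal mul z {y | ∃ x ∈ L, y = mul x γ a} := by
  obtain ⟨hLleft, hLne, hLmin⟩ := hL
  set K : Set T := {y | ∃ x ∈ L, y = mul x γ a} with hK
  have hzL : z ∈ L := zero_mem_leftIdeal mul z hz L hLleft
  have hKleft : IsLeftIdeal mul K := by
    constructor
    · exact ⟨mul z γ a, z, hzL, rfl⟩
    · rintro y ⟨t, -, β, w, ⟨x, hx, rfl⟩, rfl⟩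
      refine ⟨mul t β x, hLleft.2 ⟨t, Set.mem_univ t, β, x, hx, rfl⟩, ?_⟩
      rw [assoc]
  by_cases hKz : K = {z}
  · exact Or.inl hKz
  · refine Or.inr ⟨hKleft, hKz, ?_⟩
    intro B hB hBK
    set C : Set T := {x ∈ L | mul x γ a ∈ B} with hC
    have hzB : z ∈ B := zero_mem_leftIdeal mul z hz B hB
    have hCleft : IsLeftIdeal mul C := by
      constructor
      · exact ⟨z, hzL, by rw [(hz a γ).2]; exact hzB⟩
      · rintro y ⟨t, -, β, x, ⟨hxL, hxB⟩, rfl⟩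
        refine ⟨hLleft.2 ⟨t, Set.mem_univ t, β, x, hxL, rfl⟩, ?_⟩
        rw [assoc]
        exact hB.2 ⟨t, Set.mem_univ t, β, mul x γ a, hxB, rfl⟩
    rcases hLmin C hCleft (Set.sep_subset _ _) with hCz | hCL
    · left
      apply Set.Subset.antisymm
      · intro b hb
        obtain ⟨x, hxL, rfl⟩ := hBK hb
        have hxC : x ∈ C := ⟨hxL, hb⟩
        rw [hCz] at hxC
        rw [hxC, (hz a γ).2]
        rfl
      · intro b hb
        rw [hb]; exact hzB
    · right
      apply Set.Subset.antisymm hBK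
      rintro y ⟨x, hxL, rfl⟩
      have hxC : x ∈ C := hCL ▸ hxL
      exact hxC.2

theorem zeroLeastTwoSided_eq_union_zeroLeastLeft {T G : Type*} [Nonempty T] [Nonempty G]
    (mul : T → G → T → T)
    (assoc : ∀ (e f g : T) (α β : G), mul (mul e α f) β g = mul e α (mul f β g))
    (z : T) (hz : IsZero mul z)
    (H : Set T) (hH : IsZeroLeastTwoSidedIdeal mul z H)
    (hex : ∃ L : Set T, IsZeroLeastLeftIdeal mul z L ∧ L ⊆ H) :
    H = ⋃₀ {L : Set T | IsZeroLeastLeftIdeal mul z L ∧ L ⊆ H} := by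
  obtain ⟨L, hL, hLH⟩ := hex
  obtain ⟨⟨hHleft, hHright⟩, hHne, hHmin⟩ := hH
  have hzL : z ∈ L := zero_mem_leftIdeal mul z hz L hL.1
  -- M = L ∪ LΓT is a two-sided ideal contained in H
  set M : Set T := L ∪ gprod mul L Set.univ with hM
  have hMtwo : IsTwoSidedIdeal mul M := by
    refine ⟨⟨⟨z, Or.inl hzL⟩, ?_⟩, ⟨z, Or.inl hzL⟩, ?_⟩
    · rintro y ⟨t, -, β, w, hw | ⟨x, hx, δ, b, -, rfl⟩, rfl⟩
      · exact Or.inl (hL.1.2 ⟨t, Set.mem_univ t, β, w, hw, rfl⟩)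
      · refine Or.inr ⟨mul t β x, hL.1.2 ⟨t, Set.mem_univ t, β, x, hx, rfl⟩,
          δ, b, Set.mem_univ b, ?_⟩
        rw [assoc]
    · rintro y ⟨w, hw | ⟨x, hx, δ, b, -, rfl⟩, β, s, -, rfl⟩
      · exact Or.inr ⟨w, hw, β, s, Set.mem_univ s, rfl⟩
      · exact Or.inr ⟨x, hx, δ, mul b β s, Set.mem_univ _, assoc x b s δ β⟩
  have hMH : M ⊆ H := by
    rintro y (hy | ⟨x, hx, δ, b, -, rfl⟩)
    · exact hLH hy
    · exact hHright.2 ⟨x, hLH hx, δ, b, Set.mem_univ b, rfl⟩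
  have hMne : M ≠ {z} := by
    intro h
    apply hL.2.1
    apply Set.Subset.antisymm
    · exact fun x hx => h ▸ (Or.inl hx : x ∈ M)
    · intro x hx
      rw [hx]; exact hzL
  have hMeqH : M = H := by
    rcases hHmin M hMtwo hMH with h | h
    · exact absurd h hMne
    · exact h
  apply Set.Subset.antisymm
  · intro h hh
    rw [← hMeqH] at hh
    rcases hh with hh | ⟨x, hx, γ, a, -, rfl⟩
    · exact ⟨L, ⟨hL, hLH⟩, hh⟩
    · set K : Set T := {y | ∃ x ∈ L, y = mul x γ a} with hK
      have hKH : K ⊆ H := by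
        rintro y ⟨x', hx', rfl⟩
        exact hHright.2 ⟨x', hLH hx', γ, a, Set.mem_univ a, rfl⟩
      have hmemK : mul x γ a ∈ K := ⟨x, hx, rfl⟩
      rcases Lgammaa_alt mul assoc z hz L hL γ a with hKz | hKleast
      · rw [hK, hKz] at hmemK
        exact ⟨L, ⟨hL, hLH⟩, hmemK ▸ hzL⟩
      · exact ⟨K, ⟨hKleast, hKH⟩, hmemK⟩
  · rintro y ⟨Ls, ⟨-, hsub⟩, hy⟩
    exact hsub hy
end

section
/- Let (T, Γ) be a Γ-semigroup with zero 0 and let H be a 0-least Γ-two-sided ideal of T with HΓH ≠ {0}. Then for any Γ-left ideal M of T with M ⊆ H and M ≠ {0}, one has MΓM ≠ {0}. -/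
theorem leftIdeal_sq_ne_zero {T G : Type*} [Nonempty T] [Nonempty G]
    (mul : T → G → T → T)
    (assoc : ∀ (e f g : T) (α β : G), mul (mul e α f) β g = mul e α (mul f β g))
    (z : T) (hz : IsZero mul z)
    (H : Set T) (hH : IsZeroLeastTwoSidedIdeal mul z H)
    (hHH : gprod mul H H ≠ {z}) :
    ∀ M : Set T, IsLeftIdeal mul M → M ⊆ H → M ≠ {z} →
      gprod mul M M ≠ {z} := by
  intro M hM hMH hMz hMM
  obtain ⟨⟨⟨hHne, hHl⟩, ⟨_, hHr⟩⟩, hHneq, hleast⟩ := hH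
  obtain ⟨hMne, hMleft⟩ := hM
  -- M contains a nonzero element
  obtain ⟨m0, hm0M, hm0z⟩ : ∃ m ∈ M, m ≠ z := by
    by_contra h
    push_neg at h
    exact hMz (Set.eq_singleton_iff_nonempty_unique_mem.mpr ⟨hMne, h⟩)
  -- closure of M under left multiplication
  have hMcl : ∀ (t : T) (α : G) (m : T), m ∈ M → mul t α m ∈ M := by
    intro t α m hm
    exact hMleft ⟨t, Set.mem_univ t, α, m, hm, rfl⟩
  -- products of two elements of M are z
  have hMMz : ∀ m ∈ M, ∀ (α : G), ∀ m' ∈ M, mul m α m' = z := by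
    intro m hm α m' hm'
    have : mul m α m' ∈ gprod mul M M := ⟨m, hm, α, m', hm', rfl⟩
    rw [hMM] at this
    exact this
  set J : Set T := M ∪ gprod mul M Set.univ with hJdef
  have hJH : J ⊆ H := by
    rintro x (hx | ⟨m, hm, α, t, -, rfl⟩)
    · exact hMH hx
    · exact hHr ⟨m, hMH hm, α, t, Set.mem_univ t, rfl⟩
  have hJideal : IsTwoSidedIdeal mul J := by
    refine ⟨⟨hMne.mono Set.subset_union_left, ?_⟩,
            ⟨hMne.mono Set.subset_union_left, ?_⟩⟩
    · rintro x ⟨t, -, α, j, (hj | ⟨m, hm, β, s, -, rfl⟩), rfl⟩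
      · exact Or.inl (hMcl t α j hj)
      · refine Or.inr ⟨mul t α m, hMcl t α m hm, β, s, Set.mem_univ s, ?_⟩
        rw [assoc]
    · rintro x ⟨j, (hj | ⟨m, hm, β, s, -, rfl⟩), α, t, -, rfl⟩
      · exact Or.inr ⟨j, hj, α, t, Set.mem_univ t, rfl⟩
      · exact Or.inr ⟨m, hm, β, mul s α t, Set.mem_univ _, assoc m s t β α⟩
  have hJH' : J = H := by
    rcases hleast J hJideal hJH with h | h
    · exact absurd (h ▸ Or.inl hm0M : m0 ∈ ({z} : Set T)) hm0z
    · exact h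
  -- every product hαm with h ∈ H, m ∈ M is z
  have hA : ∀ h ∈ H, ∀ (α : G), ∀ m ∈ M, mul h α m = z := by
    intro h hh α m hm
    rw [← hJH'] at hh
    rcases hh with hh | ⟨m', hm', β, s, -, rfl⟩
    · exact hMMz h hh α m hm
    · rw [assoc]
      exact hMMz m' hm' β _ (hMcl s α m hm)
  have hB : ∀ h ∈ H, ∀ (α : G), ∀ k ∈ H, mul h α k = z := by
    intro h hh α k hk
    rw [← hJH'] at hk
    rcases hk with hk | ⟨m', hm', β, s, -, rfl⟩
    · exact hA h hh α k hk
    · rw [← assoc, hA h hh α m' hm']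
      exact (hz s β).2
  apply hHH
  apply Set.eq_singleton_iff_nonempty_unique_mem.mpr
  obtain ⟨h0, hh0⟩ := hHne
  obtain ⟨γ⟩ := ‹Nonempty G›
  refine ⟨⟨mul h0 γ h0, h0, hh0, γ, h0, hh0, rfl⟩, ?_⟩
  rintro x ⟨a, ha, α, b, hb, rfl⟩
  exact hB a ha α b hb
end

section
/- Let (T, Γ) be a Γ-semigroup with zero 0 and let H be a 0-least Γ-two-sided ideal of T with HΓH ≠ {0} that contains at least one 0-least Γ-left ideal of T. Then every Γ-left ideal of H (i.e., every nonempty subset M ⊆ H with HΓM ⊆ M) is a Γ-left ideal of T (i.e., satisfies TΓM ⊆ M). -/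
/-- A right translate of a 0-least Γ-left ideal is {z} or again a 0-least Γ-left ideal. -/
lemma translate_minimal {T G : Type*} [Nonempty G] (mul : T → G → T → T)
    (assoc : ∀ (e f g : T) (α β : G), mul (mul e α f) β g = mul e α (mul f β g))
    (z : T) (hz : IsZero mul z)
    (L : Set T) (hL : IsZeroLeastLeftIdeal mul z L) (α : G) (t : T) :
    (insert z {x | ∃ l ∈ L, x = mul l α t}) = {z} ∨
      IsZeroLeastLeftIdeal mul z (insert z {x | ∃ l ∈ L, x = mul l α t}) := by
  set L' : Set T := insert z {x | ∃ l ∈ L, x = mul l α t} with hL'def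
  have hL'left : IsLeftIdeal mul L' := by
    constructor
    · exact ⟨z, Set.mem_insert _ _⟩
    · rintro x ⟨s, -, β, y, hy, rfl⟩
      rcases hy with hy | ⟨l, hl, rfl⟩
      · rw [hy, (hz s β).1]; exact Set.mem_insert _ _
      · refine Set.mem_insert_of_mem _ ⟨mul s β l, hL.1.2 ⟨s, trivial, β, l, hl, rfl⟩, ?_⟩
        rw [assoc]
  by_cases htriv : L' = {z}
  · exact Or.inl htriv
  right
  refine ⟨hL'left, htriv, ?_⟩
  intro B hB hBsub
  by_cases hBz : B = {z}
  · exact Or.inl hBz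
  right
  have hzB : z ∈ B := zero_mem_leftIdeal mul z hz B hB
  have hzL : z ∈ L := zero_mem_leftIdeal mul z hz L hL.1
  -- pull back B along the translation
  set K : Set T := insert z {l | l ∈ L ∧ mul l α t ∈ B} with hKdef
  have hKleft : IsLeftIdeal mul K := by
    constructor
    · exact ⟨z, Set.mem_insert _ _⟩
    · rintro x ⟨s, -, β, y, hy, rfl⟩
      rcases hy with hy | ⟨hyL, hyB⟩
      · rw [hy, (hz s β).1]; exact Set.mem_insert _ _
      · refine Set.mem_insert_of_mem _ ⟨hL.1.2 ⟨s, trivial, β, y, hyL, rfl⟩, ?_⟩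
        rw [assoc]
        exact hB.2 ⟨s, trivial, β, mul y α t, hyB, rfl⟩
  have hKsub : K ⊆ L := by
    rintro x (hx | ⟨hx, -⟩)
    · rw [hx]; exact hzL
    · exact hx
  have hKne : K ≠ {z} := by
    -- B contains an element b ≠ z; b = mul l α t with l ∈ L, l ≠ z
    have : ∃ b ∈ B, b ≠ z := by
      by_contra hcon
      push_neg at hcon
      exact hBz (Set.eq_singleton_iff_unique_mem.2 ⟨hzB, fun b hb => hcon b hb⟩)
    obtain ⟨b, hb, hbz⟩ := this
    rcases hBsub hb with hb' | ⟨l, hl, rfl⟩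
    · exact absurd hb' hbz
    have hlz : l ≠ z := by
      rintro rfl
      exact hbz ((hz t α).2)
    intro hKeq
    have : l ∈ K := Set.mem_insert_of_mem _ ⟨hl, hb⟩
    rw [hKeq] at this
    exact hlz this
  have hKL : K = L := (hL.2.2 K hKleft hKsub).resolve_left hKne
  -- now L' ⊆ B
  apply Set.Subset.antisymm hBsub
  rintro x (hx | ⟨l, hl, rfl⟩)
  · rw [hx]; exact hzB
  · rw [← hKL] at hl
    rcases hl with hl | ⟨-, hl⟩
    · rw [hl, (hz t α).2]; exact hzB
    · exact hl

theorem leftIdeal_of_H_is_leftIdeal_of_T {T G : Type*} [Nonempty T] [Nonempty G]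
    (mul : T → G → T → T)
    (assoc : ∀ (e f g : T) (α β : G), mul (mul e α f) β g = mul e α (mul f β g))
    (z : T) (hz : IsZero mul z)
    (H : Set T) (hH : IsZeroLeastTwoSidedIdeal mul z H)
    (hHH : gprod mul H H ≠ {z})
    (hex : ∃ L : Set T, IsZeroLeastLeftIdeal mul z L ∧ L ⊆ H) :
    ∀ M : Set T, M ⊆ H → M.Nonempty → gprod mul H M ⊆ M →
      gprod mul Set.univ M ⊆ M := by
  obtain ⟨⟨⟨hHne, hHl⟩, ⟨-, hHr⟩⟩, hHnz, hHmin⟩ := hH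
  have hzH : z ∈ H := zero_mem_leftIdeal mul z hz H ⟨hHne, hHl⟩
  -- Step 1: the left annihilator of H inside H is {z} (else HΓH = {z})
  have hann : ∀ m ∈ H, m ≠ z → ∃ h ∈ H, ∃ β : G, mul h β m ≠ z := by
    intro m hmH hmz
    by_contra hcon
    push_neg at hcon
    set A : Set T := insert z {h | h ∈ H ∧ ∀ h' ∈ H, ∀ β : G, mul h' β h = z} with hAdef
    have hAleft : IsLeftIdeal mul A := by
      refine ⟨⟨z, Set.mem_insert _ _⟩, ?_⟩
      rintro x ⟨s, -, β, y, hy, rfl⟩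
      rcases hy with hy | ⟨hyH, hyann⟩
      · rw [hy, (hz s β).1]; exact Set.mem_insert _ _
      · refine Set.mem_insert_of_mem _ ⟨hHl ⟨s, trivial, β, y, hyH, rfl⟩, ?_⟩
        intro h' hh' γ
        rw [← assoc]
        exact hyann (mul h' γ s) (hHr ⟨h', hh', γ, s, trivial, rfl⟩) β
    have hAright : IsRightIdeal mul A := by
      refine ⟨⟨z, Set.mem_insert _ _⟩, ?_⟩
      rintro x ⟨y, hy, β, s, -, rfl⟩
      rcases hy with hy | ⟨hyH, hyann⟩
      · rw [hy, (hz s β).2]; exact Set.mem_insert _ _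
      · refine Set.mem_insert_of_mem _ ⟨hHr ⟨y, hyH, β, s, trivial, rfl⟩, ?_⟩
        intro h' hh' γ
        rw [← assoc, hyann h' hh' γ, (hz s β).2]
    have hAsub : A ⊆ H := by
      rintro x (hx | ⟨hx, -⟩)
      · rw [hx]; exact hzH
      · exact hx
    rcases hHmin A ⟨hAleft, hAright⟩ hAsub with hA | hA
    · -- A = {z}, but m ∈ A and m ≠ z
      have : m ∈ A := Set.mem_insert_of_mem _ ⟨hmH, fun h' hh' β => hcon h' hh' β⟩
      rw [hA] at this
      exact hmz this
    · -- A = H, so HΓH = {z}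
      apply hHH
      apply Set.Subset.antisymm
      · rintro x ⟨h, hh, γ, h', hh', rfl⟩
        have : h' ∈ A := hA ▸ hh'
        rcases this with h'z | ⟨-, hann'⟩
        · rw [h'z, (hz h γ).1]; rfl
        · rw [hann' h hh γ]; rfl
      · rintro x hx
        obtain ⟨γ⟩ := (inferInstance : Nonempty G)
        rw [hx]
        exact ⟨z, hzH, γ, z, hzH, ((hz z γ).1).symm⟩
  -- Step 2: H is the union of {z} and the 0-least left ideals of T contained in H
  set U : Set T := {x | x = z ∨ ∃ L : Set T, IsZeroLeastLeftIdeal mul z L ∧ L ⊆ H ∧ x ∈ L}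
    with hUdef
  have hUH : U = H := by
    have hUleft : IsLeftIdeal mul U := by
      refine ⟨⟨z, Or.inl rfl⟩, ?_⟩
      rintro x ⟨s, -, β, y, hy, rfl⟩
      rcases hy with hy | ⟨L, hL, hLH, hyL⟩
      · rw [hy, (hz s β).1]; exact Or.inl rfl
      · exact Or.inr ⟨L, hL, hLH, hL.1.2 ⟨s, trivial, β, y, hyL, rfl⟩⟩
    have hUright : IsRightIdeal mul U := by
      refine ⟨⟨z, Or.inl rfl⟩, ?_⟩
      rintro x ⟨y, hy, β, s, -, rfl⟩
      rcases hy with hy | ⟨L, hL, hLH, hyL⟩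
      · rw [hy, (hz s β).2]; exact Or.inl rfl
      · rcases translate_minimal mul assoc z hz L hL β s with htr | htr
        · have : mul y β s ∈ ({z} : Set T) :=
            htr ▸ Set.mem_insert_of_mem _ ⟨y, hyL, rfl⟩
          exact Or.inl this
        · refine Or.inr ⟨insert z {x | ∃ l ∈ L, x = mul l β s}, htr, ?_,
            Set.mem_insert_of_mem _ ⟨y, hyL, rfl⟩⟩
          rintro w (hw | ⟨l, hl, rfl⟩)
          · rw [hw]; exact hzH
          · exact hHr ⟨l, hLH hl, β, s, trivial, rfl⟩
    have hUsub : U ⊆ H := by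
      rintro x (hx | ⟨L, -, hLH, hxL⟩)
      · rw [hx]; exact hzH
      · exact hLH hxL
    rcases hHmin U ⟨hUleft, hUright⟩ hUsub with hU | hU
    · -- U = {z} contradicts the existence of a 0-least left ideal in H
      exfalso
      obtain ⟨L, hL, hLH⟩ := hex
      apply hL.2.1
      have hLU : L ⊆ U := fun l hl => Or.inr ⟨L, hL, hLH, hl⟩
      rw [hU] at hLU
      exact Set.Subset.antisymm hLU
        (by rintro x hx; rw [hx]; exact zero_mem_leftIdeal mul z hz L hL.1)
    · exact hU
  -- Step 3: the main argument
  intro M hMH hMne hHM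
  have hzM : z ∈ M := by
    obtain ⟨m0, hm0⟩ := hMne
    obtain ⟨γ⟩ := (inferInstance : Nonempty G)
    have : mul z γ m0 ∈ M := hHM ⟨z, hzH, γ, m0, hm0, rfl⟩
    rwa [(hz m0 γ).2] at this
  rintro x ⟨t, -, α, m, hm, rfl⟩
  by_cases hmz : m = z
  · rw [hmz, (hz t α).1]; exact hzM
  -- m ∈ U, m ≠ z: find the 0-least left ideal L' containing m
  have hmU : m ∈ U := hUH ▸ hMH hm
  rcases hmU with hmU | ⟨L', hL', hL'H, hmL'⟩
  · exact absurd hmU hmz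
  -- B := HΓm ∪ {z} is a left ideal contained in L'
  set B : Set T := insert z {x | ∃ h ∈ H, ∃ β : G, x = mul h β m} with hBdef
  have hBleft : IsLeftIdeal mul B := by
    refine ⟨⟨z, Set.mem_insert _ _⟩, ?_⟩
    rintro x ⟨s, -, β, y, hy, rfl⟩
    rcases hy with hy | ⟨h, hh, γ, rfl⟩
    · rw [hy, (hz s β).1]; exact Set.mem_insert _ _
    · refine Set.mem_insert_of_mem _ ⟨mul s β h, hHl ⟨s, trivial, β, h, hh, rfl⟩, γ, ?_⟩
      rw [assoc]
  have hBsub : B ⊆ L' := by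
    rintro x (hx | ⟨h, hh, γ, rfl⟩)
    · rw [hx]; exact zero_mem_leftIdeal mul z hz L' hL'.1
    · exact hL'.1.2 ⟨h, trivial, γ, m, hmL', rfl⟩
  rcases hL'.2.2 B hBleft hBsub with hB | hB
  · -- B = {z} means HΓm = {z}, contradicting Step 1
    exfalso
    obtain ⟨h, hh, β, hne⟩ := hann m (hMH hm) hmz
    apply hne
    have : mul h β m ∈ B := Set.mem_insert_of_mem _ ⟨h, hh, β, rfl⟩
    rw [hB] at this
    exact this
  · -- B = L', so tαm ∈ L' = B ⊆ M
    have htm : mul t α m ∈ L' := hL'.1.2 ⟨t, trivial, α, m, hmL', rfl⟩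
    rw [← hB] at htm
    rcases htm with htm | ⟨h, hh, γ, heq⟩
    · rw [htm]; exact hzM
    · rw [heq]; exact hHM ⟨h, hh, γ, m, hm, rfl⟩
end

section
/- Let (T, Γ) be a Γ-semigroup with zero 0 and let H be a 0-least Γ-left ideal of T. Then H \ {0} is an L-class of T: for every e ∈ H with e ≠ 0, the set {f ∈ T : f L e} equals H \ {0}. -/
theorem zeroLeastLeftIdeal_sdiff_zero_is_Lclass {T G : Type*} [Nonempty T] [Nonempty G]
    (mul : T → G → T → T)
    (assoc : ∀ (e f g : T) (α β : G), mul (mul e α f) β g = mul e α (mul f β g))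
    (z : T) (hz : IsZero mul z)
    (H : Set T) (hH : IsZeroLeastLeftIdeal mul z H) :
    ∀ e ∈ H, e ≠ z → {f : T | LRel mul f e} = H \ {z} := by
  obtain ⟨⟨hHne, hHcl⟩, hHnz, hmin⟩ := hH
  obtain ⟨γ0⟩ := ‹Nonempty G›
  obtain ⟨h0, hh0⟩ := hHne
  have hzH : z ∈ H := by
    have : mul z γ0 h0 ∈ H := hHcl ⟨z, trivial, γ0, h0, hh0, rfl⟩
    rwa [(hz h0 γ0).2] at this
  have hzT : ∀ x : T, z ∈ gprod mul Set.univ {x} := fun x =>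
    ⟨z, trivial, γ0, x, rfl, ((hz x γ0).2).symm⟩
  -- B_x = {z} ∪ TΓx is a left ideal contained in H, for x ∈ H
  have hB : ∀ x ∈ H, IsLeftIdeal mul (insert z (gprod mul Set.univ {x})) ∧
      insert z (gprod mul Set.univ {x}) ⊆ H := by
    intro x hx
    refine ⟨⟨⟨z, Set.mem_insert _ _⟩, ?_⟩, ?_⟩
    · rintro y ⟨a, -, γ, b, hb, rfl⟩
      rcases hb with hb | ⟨s, -, δ, b', hb', rfl⟩
      · rw [hb, (hz a γ).1]; exact Set.mem_insert _ _
      · exact Set.mem_insert_iff.mpr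
          (Or.inr ⟨mul a γ s, trivial, δ, b', hb', (assoc a s b' γ δ).symm⟩)
    · rintro y (rfl | ⟨s, -, δ, b', hb', rfl⟩)
      · exact hzH
      · exact hHcl ⟨s, trivial, δ, b', (Set.singleton_subset_iff.mpr hx) hb', rfl⟩
  -- if TΓx ⊆ {z} for some x ∈ H with x ≠ z, then H = {z, x}
  have hdeg : ∀ x ∈ H, x ≠ z → insert z (gprod mul Set.univ {x}) = {z} →
      H = {z, x} := by
    intro x hx hxz hBx
    have hTx : gprod mul Set.univ {x} ⊆ {z} := by
      rw [← hBx]; exact Set.subset_insert _ _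
    have hideal : IsLeftIdeal mul ({z, x} : Set T) := by
      refine ⟨⟨z, Set.mem_insert _ _⟩, ?_⟩
      rintro y ⟨a, -, γ, b, hb, rfl⟩
      rcases hb with hb | hb
      · rw [hb, (hz a γ).1]; exact Set.mem_insert _ _
      · exact Set.mem_insert_iff.mpr (Or.inl (hTx ⟨a, trivial, γ, b, hb, rfl⟩))
    have hsub : ({z, x} : Set T) ⊆ H := by
      rintro y (rfl | rfl); exact hzH; exact hx
    rcases hmin _ hideal hsub with h | h
    · exact absurd (h ▸ (Set.mem_insert_iff.mpr (Or.inr rfl)) : x ∈ ({z} : Set T)) hxz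
    · exact h.symm
  intro e he hez
  ext f
  simp only [Set.mem_setOf_eq, Set.mem_diff, Set.mem_singleton_iff]
  constructor
  · intro hL
    have hfz : f ≠ z := by
      intro hfe
      rw [hfe] at hL
      have hTz : insert z (gprod mul Set.univ {z}) = {z} := by
        apply Set.Subset.antisymm
        · rintro y (rfl | ⟨a, -, γ, b, hb, rfl⟩)
          · rfl
          · rw [hb]; exact (hz a γ).1
        · exact Set.singleton_subset_iff.mpr (Set.mem_insert _ _)
      have he2 : e ∈ insert z (gprod mul Set.univ {z}) := by
        rw [hL]; exact Set.mem_insert _ _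
      rw [hTz] at he2
      exact hez he2
    refine ⟨?_, hfz⟩
    have : f ∈ insert e (gprod mul Set.univ {e}) := by
      rw [← hL]; exact Set.mem_insert _ _
    rcases this with rfl | ⟨a, -, γ, b, hb, rfl⟩
    · exact he
    · rcases hb with rfl
      exact hHcl ⟨a, trivial, γ, b, he, rfl⟩
  · rintro ⟨hf, hfz⟩
    rcases hmin _ (hB e he).1 (hB e he).2 with hBe | hBe
    · have hHe := hdeg e he hez hBe
      have : f = e := by
        rcases hHe ▸ hf with rfl | rfl
        · exact absurd rfl hfz
        · rfl
      subst this; rfl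
    · rcases hmin _ (hB f hf).1 (hB f hf).2 with hBf | hBf
      · have hHf := hdeg f hf hfz hBf
        have : e = f := by
          rcases hHf ▸ he with rfl | rfl
          · exact absurd rfl hez
          · rfl
        subst this; rfl
      · -- both insert z TΓe = H and insert z TΓf = H
        have hTe : gprod mul Set.univ {e} = H := by
          rw [← hBe]
          exact (Set.insert_eq_self.mpr (hzT e)).symm
        have hTf : gprod mul Set.univ {f} = H := by
          rw [← hBf]
          exact (Set.insert_eq_self.mpr (hzT f)).symm
        unfold LRel
        rw [Set.insert_eq_self.mpr (by rw [hTf]; exact hf),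
            Set.insert_eq_self.mpr (by rw [hTe]; exact he), hTe, hTf]
end

section
/- Let (T, Γ) be a completely 0-simple Γ-semigroup. Then the nonzero elements of T form a single D-class (i.e., e D f for all nonzero e, f ∈ T), and every nonzero element of T is regular (for every nonzero a ∈ T there exist x ∈ T and α, β ∈ Γ with aαxβa = a). -/
lemma core_inverse {T : Type*} (m : T → T → T)
    (A : ∀ a b c, m (m a b) c = m a (m b c))
    (z e x P Q : T)
    (hz : ∀ a, m a z = z ∧ m z a = z)
    (he : m e e = e) (hez : e ≠ z)
    (hprim : ∀ f, f ≠ z → m f f = f → m f e = f → m e f = f → f = e)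
    (hex : m e x = x) (hxe : m x e = x) (hxz : x ≠ z)
    (heP : m e P = P) (hPe : m P e = P) (heQ : m e Q = Q) (hQe : m Q e = Q)
    (hPxQ : m P (m x Q) = e) :
    m x (m Q P) = e ∧ m (m Q P) x = e ∧ m e (m Q P) = m Q P ∧ m (m Q P) e = m Q P := by
  have hPxQ' : ∀ w, m P (m x (m Q w)) = m e w := fun w => by
    rw [← A x Q w, ← A P (m x Q) w, hPxQ]
  have heP' : ∀ w, m e (m P w) = m P w := fun w => by rw [← A, heP]
  have heQ' : ∀ w, m e (m Q w) = m Q w := fun w => by rw [← A, heQ]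
  have hex' : ∀ w, m e (m x w) = m x w := fun w => by rw [← A, hex]
  -- f := m x (m Q P)
  have hff : m (m x (m Q P)) (m x (m Q P)) = m x (m Q P) := by
    have h1 : m (m x (m Q P)) (m x (m Q P)) = m x (m Q (m P (m x (m Q P)))) := by
      simp only [A]
    rw [h1, hPxQ' P, heP]
  have hfe : m (m x (m Q P)) e = m x (m Q P) := by
    have h1 : m (m x (m Q P)) e = m x (m Q (m P e)) := by simp only [A]
    rw [h1, hPe]
  have hef : m e (m x (m Q P)) = m x (m Q P) := hex' _
  have hfz : m x (m Q P) ≠ z := by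
    intro hf
    apply hez
    have h1 : e = m P (m x (m Q (m P (m x Q)))) := by
      conv_lhs => rw [← he]
      conv_lhs => rw [← hPxQ]
      simp only [A]
    have h2 : m x (m Q (m P (m x Q))) = m (m x (m Q P)) (m x Q) := by simp only [A]
    rw [h1, h2, hf, (hz (m x Q)).2, (hz P).1]
  have hf : m x (m Q P) = e := hprim _ hfz hff hfe hef
  -- g := m Q (m P x)
  have hgg : m (m Q (m P x)) (m Q (m P x)) = m Q (m P x) := by
    have h1 : m (m Q (m P x)) (m Q (m P x)) = m Q (m P (m x (m Q (m P x)))) := by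
      simp only [A]
    rw [h1, hPxQ' (m P x), heP' x]
  have hge : m (m Q (m P x)) e = m Q (m P x) := by
    have h1 : m (m Q (m P x)) e = m Q (m P (m x e)) := by simp only [A]
    rw [h1, hxe]
  have heg : m e (m Q (m P x)) = m Q (m P x) := heQ' _
  have hgz : m Q (m P x) ≠ z := by
    intro hg
    apply hxz
    have h1 : x = m (m x (m Q P)) x := by rw [hf, hex]
    have h2 : m (m x (m Q P)) x = m x (m Q (m P x)) := by simp only [A]
    rw [h1, h2, hg, (hz x).1]
  have hg : m Q (m P x) = e := hprim _ hgz hgg hge heg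
  refine ⟨hf, ?_, heQ' P, ?_⟩
  · rw [A]; exact hg
  · rw [A, hPe]


lemma step1 {T G : Type*} [Nonempty G] (mul : T → G → T → T)
    (assoc : ∀ (e f g : T) (α β : G), mul (mul e α f) β g = mul e α (mul f β g))
    (z : T) (hz : IsZero mul z) (hzs : IsZeroSimple mul z) :
    ∀ a, a ≠ z → ∀ t, ∃ x y : T, ∃ α β : G, t = mul (mul x α a) β y := by
  obtain ⟨γ0⟩ := ‹Nonempty G›
  -- TΓT = univ
  have hPne : (gprod mul Set.univ Set.univ).Nonempty :=
    ⟨z, ⟨z, trivial, γ0, z, trivial, ((hz z γ0).1).symm⟩⟩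
  have hPid : IsTwoSidedIdeal mul (gprod mul Set.univ Set.univ) := by
    refine ⟨⟨hPne, ?_⟩, ⟨hPne, ?_⟩⟩
    · rintro x ⟨t, -, γ, p, ⟨a, -, δ, b, -, rfl⟩, rfl⟩
      exact ⟨mul t γ a, trivial, δ, b, trivial, (assoc t a b γ δ).symm⟩
    · rintro x ⟨p, ⟨a, -, δ, b, -, rfl⟩, γ, t, -, rfl⟩
      exact ⟨a, trivial, δ, mul b γ t, trivial, assoc a b t δ γ⟩
  have hP : gprod mul Set.univ Set.univ = Set.univ :=
    (hzs.2 _ hPid).resolve_left hzs.1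
  -- K = {z}
  set K : Set T := {a | ∀ (x y : T) (α β : G), mul (mul x α a) β y = z} with hKdef
  have hKz : z ∈ K := fun x y α β => by rw [(hz x α).1, (hz y β).2]
  have hKid : IsTwoSidedIdeal mul K := by
    refine ⟨⟨⟨z, hKz⟩, ?_⟩, ⟨⟨z, hKz⟩, ?_⟩⟩
    · rintro c ⟨t, -, γ, a, ha, rfl⟩ x y α β
      have h1 : mul x α (mul t γ a) = mul (mul x α t) γ a := (assoc x t a α γ).symm
      rw [h1, ha (mul x α t) y γ β]
    · rintro c ⟨a, ha, γ, t, -, rfl⟩ x y α β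
      have h1 : mul x α (mul a γ t) = mul (mul x α a) γ t := (assoc x a t α γ).symm
      rw [h1, assoc (mul x α a) t y γ β, ha x (mul t β y) α γ]
  have hK : K = {z} := by
    rcases hzs.2 K hKid with h | h
    · exact h
    · exfalso
      apply hzs.1
      ext w
      simp only [Set.mem_singleton_iff]
      constructor
      · rintro ⟨s, -, γ, t, -, rfl⟩
        have hs : s ∈ gprod mul Set.univ Set.univ := by rw [hP]; trivial
        obtain ⟨a, -, δ, b, -, rfl⟩ := hs
        have hb : b ∈ K := by rw [h]; trivial
        exact hb a t δ γ
      · rintro rfl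
        rw [hP]; trivial
  intro a haz t
  have haK : a ∉ K := fun h => haz (by rwa [hK, Set.mem_singleton_iff] at h)
  simp only [hKdef, Set.mem_setOf_eq, not_forall] at haK
  obtain ⟨x0, y0, α0, β0, hne⟩ := haK
  -- J = TΓaΓT
  have hmem0 : mul (mul x0 α0 a) β0 y0 ∈ gprod mul (gprod mul Set.univ {a}) Set.univ :=
    ⟨mul x0 α0 a, ⟨x0, trivial, α0, a, rfl, rfl⟩, β0, y0, trivial, rfl⟩
  have hJid : IsTwoSidedIdeal mul (gprod mul (gprod mul Set.univ {a}) Set.univ) := by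
    refine ⟨⟨⟨_, hmem0⟩, ?_⟩, ⟨⟨_, hmem0⟩, ?_⟩⟩
    · rintro c ⟨t', -, γ, w, ⟨u, ⟨x, -, α, a', rfl, rfl⟩, β, y, -, rfl⟩, rfl⟩
      refine ⟨mul (mul t' γ x) α a', ⟨mul t' γ x, trivial, α, a', rfl, rfl⟩, β, y, trivial, ?_⟩
      rw [assoc (mul t' γ x) a' y α β, assoc t' x (mul a' β y) γ α,
        ← assoc x a' y α β]
    · rintro c ⟨w, ⟨u, ⟨x, -, α, a', rfl, rfl⟩, β, y, -, rfl⟩, γ, t', -, rfl⟩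
      exact ⟨mul x α a', ⟨x, trivial, α, a', rfl, rfl⟩, β, mul y γ t', trivial,
        assoc (mul x α a') y t' β γ⟩
  have hJ : gprod mul (gprod mul Set.univ {a}) Set.univ = Set.univ := by
    rcases hzs.2 _ hJid with h | h
    · exact absurd (by rw [h] at hmem0; exact hmem0 : mul (mul x0 α0 a) β0 y0 = z) hne
    · exact h
  have ht : t ∈ gprod mul (gprod mul Set.univ {a}) Set.univ := by rw [hJ]; trivial
  obtain ⟨w, ⟨x, -, α, a', rfl, rfl⟩, β, y, -, rfl⟩ := ht
  exact ⟨x, y, α, β, rfl⟩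


lemma eSe_inverse {T G : Type*} [Nonempty G] (mul : T → G → T → T)
    (assoc : ∀ (e f g : T) (α β : G), mul (mul e α f) β g = mul e α (mul f β g))
    (z : T) (hz : IsZero mul z) (hzs : IsZeroSimple mul z)
    (e : T) (lam : G) (he : mul e lam e = e) (hez : e ≠ z)
    (hprim : ∀ f : T, f ≠ z → IsIdempotent mul f → IdemLe mul f e → f = e) :
    ∀ x, x ≠ z → mul e lam x = x → mul x lam e = x →
      ∃ r, mul e lam r = r ∧ mul r lam e = r ∧ mul x lam r = e ∧ mul r lam x = e := by
  intro x hxz hex hxe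
  obtain ⟨p, q, μ, ν, hE⟩ := step1 mul assoc z hz hzs x hxz e
  set P : T := mul (mul e lam p) μ e with hPdef
  set Q : T := mul (mul e ν q) lam e with hQdef
  have heP : mul e lam P = P := by
    rw [hPdef, ← assoc e (mul e lam p) e lam μ, ← assoc e e p lam lam, he]
  have hPe : mul P lam e = P := by rw [hPdef, assoc (mul e lam p) e e μ lam, he]
  have heQ : mul e lam Q = Q := by
    rw [hQdef, ← assoc e (mul e ν q) e lam lam, ← assoc e e q lam ν, he]
  have hQe : mul Q lam e = Q := by rw [hQdef, assoc (mul e ν q) e e lam lam, he]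
  have hex' : ∀ w, mul e lam (mul x lam w) = mul x lam w := fun w => by
    rw [← assoc, hex]
  have hxe' : ∀ (σ : G) (w : T), mul x lam (mul e σ w) = mul x σ w := fun σ w => by
    rw [← assoc, hxe]
  have hPxQ : mul P lam (mul x lam Q) = e := by
    have h1 : mul P lam (mul x lam Q) =
        mul e lam (mul p μ (mul e lam (mul x lam (mul e ν (mul q lam e))))) := by
      rw [hPdef, hQdef]; simp only [assoc]
    rw [h1, hex' (mul e ν (mul q lam e)), hxe' ν (mul q lam e)]
    have h2 : mul e lam (mul p μ (mul x ν (mul q lam e))) =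
        mul (mul e lam (mul (mul p μ x) ν q)) lam e := by simp only [assoc]
    rw [h2, ← hE, he, he]
  obtain ⟨h1, h2, h3, h4⟩ := core_inverse (fun a b => mul a lam b)
    (fun a b c => assoc a b c lam lam) z e x P Q (fun a => hz a lam) he hez
    (fun f hf hff hfe hef => hprim f hf ⟨lam, hff⟩ ⟨lam, lam, hfe, hef⟩)
    hex hxe hxz heP hPe heQ hQe hPxQ
  exact ⟨mul Q lam P, h3, h4, h1, h2⟩


lemma reg {T G : Type*} [Nonempty G] (mul : T → G → T → T)
    (assoc : ∀ (e f g : T) (α β : G), mul (mul e α f) β g = mul e α (mul f β g))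
    (z : T) (hz : IsZero mul z) (hzs : IsZeroSimple mul z)
    (e : T) (lam : G) (he : mul e lam e = e) (hez : e ≠ z)
    (hprim : ∀ f : T, f ≠ z → IsIdempotent mul f → IdemLe mul f e → f = e) :
    ∀ a, a ≠ z → ∃ (x : T) (α β : G), mul (mul a α x) β a = a := by
  intro a haz
  obtain ⟨s, t, γ, δ, ha⟩ := step1 mul assoc z hz hzs e hez a
  obtain ⟨u, v, α', β', hE⟩ := step1 mul assoc z hz hzs a haz e
  set Q : T := mul t β' v with hQdef
  set Z : T := mul (mul u α' s) γ e with hZdef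
  set Y : T := mul (mul e δ Q) lam e with hYdef
  have hPeQ : mul Z δ Q = e := by
    rw [hZdef, hQdef]
    conv_rhs => rw [hE, ha]
    simp only [assoc]
  have hZe : mul Z lam e = Z := by rw [hZdef, assoc, he]
  have hZY : mul Z lam Y = e := by
    rw [hYdef, ← assoc Z (mul e δ Q) e lam lam, ← assoc Z e Q lam δ, hZe, hPeQ, he]
  have heY : mul e lam Y = Y := by
    rw [hYdef, ← assoc e (mul e δ Q) e lam lam, ← assoc e e Q lam δ, he]
  have hYe : mul Y lam e = Y := by rw [hYdef, assoc (mul e δ Q) e e lam lam, he]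
  have hYz : Y ≠ z := by
    intro h
    rw [h, (hz Z lam).1] at hZY
    exact hez hZY.symm
  obtain ⟨r, her, hre, hYr, hrY⟩ :=
    eSe_inverse mul assoc z hz hzs e lam he hez hprim Y hYz heY hYe
  have hZr : Z = r := by
    calc Z = mul Z lam e := hZe.symm
    _ = mul Z lam (mul Y lam r) := by rw [hYr]
    _ = mul (mul Z lam Y) lam r := (assoc Z Y r lam lam).symm
    _ = mul e lam r := by rw [hZY]
    _ = r := her
  have hYZ : mul Y lam Z = e := by rw [hZr]; exact hYr
  refine ⟨mul (mul v lam e) lam u, β', α', ?_⟩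
  have key : mul (mul a β' (mul (mul v lam e) lam u)) α' a
      = mul s γ (mul (mul Y lam Z) δ t) := by
    rw [hYdef, hZdef, hQdef]
    conv_lhs => rw [ha]
    simp only [assoc]
  rw [key, hYZ, ← assoc s e t γ δ, ← ha]


lemma Semin {T G : Type*} [Nonempty G] (mul : T → G → T → T)
    (assoc : ∀ (e f g : T) (α β : G), mul (mul e α f) β g = mul e α (mul f β g))
    (z : T) (hz : IsZero mul z) (hzs : IsZeroSimple mul z)
    (e : T) (lam : G) (he : mul e lam e = e) (hez : e ≠ z)
    (hprim : ∀ f : T, f ≠ z → IsIdempotent mul f → IdemLe mul f e → f = e) :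
    ∀ B : Set T, IsLeftIdeal mul B → B ⊆ gprod mul Set.univ {e} →
      (∃ b ∈ B, b ≠ z) → gprod mul Set.univ {e} ⊆ B := by
  have sing : ∀ {u v : T}, u ∈ ({v} : Set T) → u = v := fun h => h
  rintro B hB hBe ⟨b, hbB, hbz⟩
  obtain ⟨w, -, μ, e1, he1, hb⟩ := hBe hbB
  rw [sing he1] at hb
  have hbe : mul b lam e = b := by rw [hb, assoc, he]
  obtain ⟨x, y, ν, ξ, hEb⟩ := step1 mul assoc z hz hzs b hbz e
  set c : T := mul (mul e lam x) ν b with hcdef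
  have hce : mul c lam e = c := by rw [hcdef, assoc (mul e lam x) b e ν lam, hbe]
  have hec : mul e lam c = c := by
    rw [hcdef, ← assoc e (mul e lam x) b lam ν, ← assoc e e x lam lam, he]
  have hceq : mul c ξ (mul y lam e) = e := by
    have h1 : mul c ξ (mul y lam e) = mul (mul e lam (mul (mul x ν b) ξ y)) lam e := by
      rw [hcdef]; simp only [assoc]
    rw [h1, ← hEb, he, he]
  have hcz : c ≠ z := by
    intro h
    rw [h, (hz (mul y lam e) ξ).2] at hceq
    exact hez hceq.symm
  obtain ⟨r, her, hre, hcr, hrc⟩ :=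
    eSe_inverse mul assoc z hz hzs e lam he hez hprim c hcz hec hce
  have heb : e = mul (mul r lam (mul e lam x)) ν b := by
    calc e = mul r lam c := hrc.symm
    _ = mul (mul r lam (mul e lam x)) ν b := by rw [hcdef, ← assoc]
  rintro w' ⟨u, -, σ, e2, he2, rfl⟩
  rw [sing he2]
  refine hB.2 ⟨mul u σ (mul r lam (mul e lam x)), trivial, ν, b, hbB, ?_⟩
  rw [assoc]
  conv_lhs => rw [heb]


lemma lemN {T G : Type*} [Nonempty G] (mul : T → G → T → T)
    (assoc : ∀ (e f g : T) (α β : G), mul (mul e α f) β g = mul e α (mul f β g))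
    (z : T) (hz : IsZero mul z) (hzs : IsZeroSimple mul z)
    (e : T) (lam : G) (he : mul e lam e = e) (hez : e ≠ z)
    (hprim : ∀ f : T, f ≠ z → IsIdempotent mul f → IdemLe mul f e → f = e)
    (hreg : ∀ b : T, b ≠ z → b ∈ gprod mul Set.univ {b}) :
    ∀ a b : T, a ≠ z → b ≠ z → b ∈ gprod mul Set.univ {a} →
      gprod mul Set.univ {a} ⊆ gprod mul Set.univ {b} := by
  have sing : ∀ {u v : T}, u ∈ ({v} : Set T) → u = v := fun h => h
  intro a b haz hbz hba
  obtain ⟨s, t, γ, δ, ha⟩ := step1 mul assoc z hz hzs e hez a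
  have had : a = mul s γ (mul e δ t) := by rw [ha, assoc]
  have hSBl : ∀ (w' : T) (σ' : G) (p : T), p ∈ gprod mul Set.univ {b} →
      mul w' σ' p ∈ gprod mul Set.univ {b} := by
    rintro w' σ' p ⟨w2, -, σ2, b2, hb2, rfl⟩
    rw [sing hb2]
    exact ⟨mul w' σ' w2, trivial, σ2, b, rfl, (assoc w' w2 b σ' σ2).symm⟩
  set K : Set T :=
    {w | (mul w δ t ∈ gprod mul Set.univ {b} ∧ w ∈ gprod mul Set.univ {e}) ∨ w = z}
    with hKdef
  have hKideal : IsLeftIdeal mul K := by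
    refine ⟨⟨z, Or.inr rfl⟩, ?_⟩
    rintro w ⟨u, -, σ, k, hk, rfl⟩
    rcases hk with ⟨hk1, hk2⟩ | hkz
    · obtain ⟨w3, -, σ3, e3, he3, rfl⟩ := hk2
      rw [sing he3] at hk1 ⊢
      left
      refine ⟨?_, ⟨mul u σ w3, trivial, σ3, e, rfl, (assoc u w3 e σ σ3).symm⟩⟩
      rw [assoc]
      exact hSBl u σ _ hk1
    · right; rw [hkz]; exact (hz u σ).1
  have hKe : K ⊆ gprod mul Set.univ {e} := by
    rintro w (⟨-, hw⟩ | hwz)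
    · exact hw
    · rw [hwz]
      exact ⟨z, trivial, lam, e, rfl, ((hz e lam).2).symm⟩
  have hKnz : ∃ w ∈ K, w ≠ z := by
    obtain ⟨w1, -, σ1, a1, ha1, hb1⟩ := hba
    rw [sing ha1] at hb1
    have hb2 : b = mul (mul (mul w1 σ1 s) γ e) δ t := by
      rw [hb1, had, ← assoc, ← assoc]
    refine ⟨mul (mul w1 σ1 s) γ e,
      Or.inl ⟨?_, ⟨mul w1 σ1 s, trivial, γ, e, rfl, rfl⟩⟩, ?_⟩
    · rw [← hb2]; exact hreg b hbz
    · intro h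
      rw [h, (hz t δ).2] at hb2
      exact hbz hb2
  have hmin := Semin mul assoc z hz hzs e lam he hez hprim K hKideal hKe hKnz
  rintro w ⟨u, -, σ, a1, ha1, rfl⟩
  rw [sing ha1]
  have hue : mul (mul u σ s) γ e ∈ K := hmin ⟨mul u σ s, trivial, γ, e, rfl, rfl⟩
  have hwa : mul u σ a = mul (mul (mul u σ s) γ e) δ t := by
    rw [had]; simp only [assoc]
  rcases hue with ⟨hk1, -⟩ | huz
  · rw [hwa]; exact hk1
  · rw [hwa, huz, (hz t δ).2]
    exact ⟨z, trivial, lam, b, rfl, ((hz b lam).2).symm⟩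


theorem completelyZeroSimple_Dclass_and_regular {T G : Type*} [Nonempty T] [Nonempty G]
    (mul : T → G → T → T)
    (assoc : ∀ (e f g : T) (α β : G), mul (mul e α f) β g = mul e α (mul f β g))
    (z : T) (hz : IsZero mul z)
    (hcs : IsCompletelyZeroSimple mul z) :
    (∀ e f : T, e ≠ z → f ≠ z → DRel mul e f) ∧
      (∀ a : T, a ≠ z → ∃ (x : T) (α β : G), mul (mul a α x) β a = a) := by
  have sing : ∀ {u v : T}, u ∈ ({v} : Set T) → u = v := fun h => h
  obtain ⟨hzs, e0, hez, ⟨lam, he⟩, hprim⟩ := hcs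
  have hregT : ∀ a, a ≠ z → ∃ (x : T) (α β : G), mul (mul a α x) β a = a :=
    reg mul assoc z hz hzs e0 lam he hez hprim
  -- the flipped multiplication
  set fm : T → G → T → T := fun a γ b => mul b γ a with hfm
  have fassoc : ∀ (a b c : T) (α β : G), fm (fm a α b) β c = fm a α (fm b β c) :=
    fun a b c α β => (assoc c b a β α).symm
  have fhz : IsZero fm z := fun a α => ⟨(hz a α).2, (hz a α).1⟩
  have gflip : ∀ A B : Set T, gprod fm A B = gprod mul B A := by
    intro A B; ext x
    constructor
    · rintro ⟨a, haA, γ, b, hbB, rfl⟩; exact ⟨b, hbB, γ, a, haA, rfl⟩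
    · rintro ⟨b, hbB, γ, a, haA, rfl⟩; exact ⟨a, haA, γ, b, hbB, rfl⟩
  have fhzs : IsZeroSimple fm z := by
    constructor
    · rw [gflip]; exact hzs.1
    · intro B hB
      apply hzs.2
      refine ⟨⟨hB.2.1, ?_⟩, ⟨hB.1.1, ?_⟩⟩
      · rw [← gflip]; exact hB.2.2
      · rw [← gflip]; exact hB.1.2
  have fhe : fm e0 lam e0 = e0 := he
  have fprim : ∀ f : T, f ≠ z → IsIdempotent fm f → IdemLe fm f e0 → f = e0 := by
    intro f hf hfi hfle
    obtain ⟨α, hα⟩ := hfi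
    obtain ⟨x, y, h1, h2⟩ := hfle
    exact hprim f hf ⟨α, hα⟩ ⟨y, x, h2, h1⟩
  have memL : ∀ a, a ≠ z → a ∈ gprod mul Set.univ {a} := by
    intro a haz
    obtain ⟨x, α, β, hx⟩ := hregT a haz
    exact ⟨mul a α x, trivial, β, a, rfl, hx.symm⟩
  have memR : ∀ a, a ≠ z → a ∈ gprod mul {a} Set.univ := by
    intro a haz
    obtain ⟨x, α, β, hx⟩ := hregT a haz
    refine ⟨a, rfl, α, mul x β a, trivial, ?_⟩
    rw [← assoc]
    exact hx.symm
  have memRf : ∀ a, a ≠ z → a ∈ gprod fm Set.univ {a} := by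
    intro a haz; rw [gflip]; exact memR a haz
  have hN : ∀ a b : T, a ≠ z → b ≠ z → b ∈ gprod mul Set.univ {a} →
      gprod mul Set.univ {a} ⊆ gprod mul Set.univ {b} :=
    lemN mul assoc z hz hzs e0 lam he hez hprim memL
  have hNf : ∀ a b : T, a ≠ z → b ≠ z → b ∈ gprod fm Set.univ {a} →
      gprod fm Set.univ {a} ⊆ gprod fm Set.univ {b} :=
    lemN fm fassoc z fhz fhzs e0 lam fhe hez fprim memRf
  constructor
  · intro a b haz hbz
    obtain ⟨u, v, μ, δ, hb⟩ := step1 mul assoc z hz hzs a haz b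
    set c := mul u μ a with hcdef
    have hcz : c ≠ z := by
      intro h
      apply hbz
      rw [hb, h, (hz v δ).2]
    refine ⟨c, ?_, ?_⟩
    · -- LRel a c
      unfold LRel
      have h1 : gprod mul Set.univ {a} = gprod mul Set.univ {c} := by
        apply Set.Subset.antisymm
        · exact hN a c haz hcz ⟨u, trivial, μ, a, rfl, hcdef⟩
        · rintro w ⟨w1, -, σ1, c1, hc1, rfl⟩
          refine ⟨mul w1 σ1 u, trivial, μ, a, rfl, ?_⟩
          rw [sing hc1, hcdef, ← assoc]
      rw [Set.insert_eq_self.mpr (memL a haz), Set.insert_eq_self.mpr (memL c hcz), h1]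
    · -- RRel c b
      unfold RRel
      have h2 : gprod mul {c} Set.univ = gprod mul {b} Set.univ := by
        apply Set.Subset.antisymm
        · have hmem : b ∈ gprod fm Set.univ {c} := by
            rw [gflip]
            exact ⟨c, rfl, δ, v, trivial, hb⟩
          have hsub := hNf c b hcz hbz hmem
          rw [gflip, gflip] at hsub
          exact hsub
        · rintro w ⟨b1, hb1, σ1, w1, -, rfl⟩
          refine ⟨c, rfl, δ, mul v σ1 w1, trivial, ?_⟩
          rw [sing hb1, hb, assoc]
      rw [Set.insert_eq_self.mpr (memR c hcz), Set.insert_eq_self.mpr (memR b hbz), h2]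
  · exact hregT
end

section
/- Let (T, Γ) be a 0-simple Γ-semigroup with zero 0 that contains at least one 0-least Γ-left ideal and at least one 0-least Γ-right ideal. Then for each 0-least Γ-left ideal H of T there exists a 0-least Γ-right ideal I of T such that HΓI ≠ {0} and HΓI = T. -/
theorem exists_zeroLeastRight_with_prod_univ {T G : Type*} [Nonempty T] [Nonempty G]
    (mul : T → G → T → T)
    (assoc : ∀ (e f g : T) (α β : G), mul (mul e α f) β g = mul e α (mul f β g))
    (z : T) (hz : IsZero mul z)
    (hzs : IsZeroSimple mul z)
    (hexL : ∃ L : Set T, IsZeroLeastLeftIdeal mul z L)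
    (hexR : ∃ R : Set T, IsZeroLeastRightIdeal mul z R) :
    ∀ H : Set T, IsZeroLeastLeftIdeal mul z H →
      ∃ I : Set T, IsZeroLeastRightIdeal mul z I ∧
        gprod mul H I ≠ {z} ∧ gprod mul H I = Set.univ := by
  obtain ⟨R, ⟨⟨r0, hr0⟩, hRcl⟩, hRne, hRmin⟩ := hexR
  intro H hH
  obtain ⟨⟨⟨h0, hh0⟩, hHcl⟩, hHne, hHmin⟩ := hH
  have γ0 : G := Classical.arbitrary G
  have zR : z ∈ R := hRcl ⟨r0, hr0, γ0, z, trivial, ((hz r0 γ0).1).symm⟩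
  have zH : z ∈ H := hHcl ⟨z, trivial, γ0, h0, hh0, ((hz h0 γ0).2).symm⟩
  have nztriv : ∀ S : Set T, z ∈ S → S ≠ {z} → ∃ x ∈ S, x ≠ z := by
    intro S hzS hSne
    by_contra hc
    push_neg at hc
    exact hSne (Set.eq_singleton_iff_unique_mem.mpr ⟨hzS, hc⟩)
  -- TΓR = univ
  have hTR : gprod mul Set.univ R = Set.univ := by
    have two : IsTwoSidedIdeal mul (gprod mul Set.univ R) := by
      refine ⟨⟨⟨z, z, trivial, γ0, z, zR, ((hz z γ0).2).symm⟩, ?_⟩,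
        ⟨⟨z, z, trivial, γ0, z, zR, ((hz z γ0).2).symm⟩, ?_⟩⟩
      · rintro y ⟨s, -, β, w, ⟨t, -, γ, r, hr, rfl⟩, rfl⟩
        exact ⟨mul s β t, trivial, γ, r, hr, (assoc s t r β γ).symm⟩
      · rintro y ⟨w, ⟨t, -, γ, r, hr, rfl⟩, β, s, -, rfl⟩
        exact ⟨t, trivial, γ, mul r β s, hRcl ⟨r, hr, β, s, trivial, rfl⟩,
          assoc t r s γ β⟩
    rcases hzs.2 _ two with h1 | h1
    · exfalso
      have hRtwo : IsTwoSidedIdeal mul R := by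
        refine ⟨⟨⟨r0, hr0⟩, ?_⟩, ⟨⟨r0, hr0⟩, hRcl⟩⟩
        rintro y hy
        have : y ∈ ({z} : Set T) := h1 ▸ hy
        rw [Set.mem_singleton_iff] at this
        rw [this]; exact zR
      rcases hzs.2 R hRtwo with h2 | h2
      · exact hRne h2
      · rw [h2] at h1; exact hzs.1 h1
    · exact h1
  -- HΓT = univ
  have hHT : gprod mul H Set.univ = Set.univ := by
    have two : IsTwoSidedIdeal mul (gprod mul H Set.univ) := by
      refine ⟨⟨⟨z, z, zH, γ0, z, trivial, ((hz z γ0).2).symm⟩, ?_⟩,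
        ⟨⟨z, z, zH, γ0, z, trivial, ((hz z γ0).2).symm⟩, ?_⟩⟩
      · rintro y ⟨s, -, β, w, ⟨h, hh, γ, r, -, rfl⟩, rfl⟩
        exact ⟨mul s β h, hHcl ⟨s, trivial, β, h, hh, rfl⟩, γ, r, trivial,
          (assoc s h r β γ).symm⟩
      · rintro y ⟨w, ⟨h, hh, γ, r, -, rfl⟩, β, s, -, rfl⟩
        exact ⟨h, hh, γ, mul r β s, trivial, assoc h r s γ β⟩
    rcases hzs.2 _ two with h1 | h1
    · exfalso
      have hHtwo : IsTwoSidedIdeal mul H := by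
        refine ⟨⟨⟨h0, hh0⟩, hHcl⟩, ⟨⟨h0, hh0⟩, ?_⟩⟩
        rintro y hy
        have : y ∈ ({z} : Set T) := h1 ▸ hy
        rw [Set.mem_singleton_iff] at this
        rw [this]; exact zH
      rcases hzs.2 H hHtwo with h2 | h2
      · exact hHne h2
      · rw [h2] at h1; exact hzs.1 h1
    · exact h1
  -- pick a nonzero element and decompose it
  have zTT : z ∈ gprod mul Set.univ Set.univ := ⟨z, trivial, γ0, z, trivial, ((hz z γ0).2).symm⟩
  obtain ⟨x, -, hxne⟩ := nztriv _ zTT hzs.1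
  have hx1 : x ∈ gprod mul H Set.univ := by rw [hHT]; trivial
  obtain ⟨h, hh, α, w, -, rfl⟩ := hx1
  have hw1 : w ∈ gprod mul Set.univ R := by rw [hTR]; trivial
  obtain ⟨t, -, γ, r, hr, rfl⟩ := hw1
  -- the right ideal I = tγR
  set I : Set T := {y | ∃ r' ∈ R, y = mul t γ r'} with hIdef
  have hItr : mul t γ r ∈ I := ⟨r, hr, rfl⟩
  have htrnz : mul t γ r ≠ z := by
    intro e
    exact hxne (by rw [e]; exact (hz h α).1)
  have hIri : IsRightIdeal mul I := by
    refine ⟨⟨mul t γ r, hItr⟩, ?_⟩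
    rintro y ⟨a, ⟨r', hr', rfl⟩, β, s, -, rfl⟩
    exact ⟨mul r' β s, hRcl ⟨r', hr', β, s, trivial, rfl⟩, assoc t r' s γ β⟩
  have hIne : I ≠ {z} := by
    intro e
    have : mul t γ r ∈ ({z} : Set T) := e ▸ hItr
    exact htrnz this
  have hImin : ∀ B : Set T, IsRightIdeal mul B → B ⊆ I → B = {z} ∨ B = I := by
    intro B hB hBI
    have zB : z ∈ B := by
      obtain ⟨b, hb⟩ := hB.1
      exact hB.2 ⟨b, hb, γ0, z, trivial, ((hz b γ0).1).symm⟩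
    set C : Set T := {r' | r' ∈ R ∧ mul t γ r' ∈ B} with hCdef
    have hCri : IsRightIdeal mul C := by
      constructor
      · obtain ⟨b, hb⟩ := hB.1
        obtain ⟨r', hr', rfl⟩ := hBI hb
        exact ⟨r', hr', hb⟩
      · rintro y ⟨a, ⟨haR, haB⟩, β, s, -, rfl⟩
        refine ⟨hRcl ⟨a, haR, β, s, trivial, rfl⟩, ?_⟩
        rw [← assoc t a s γ β]
        exact hB.2 ⟨_, haB, β, s, trivial, rfl⟩
    rcases hRmin C hCri (fun r' hr' => hr'.1) with hC | hC
    · left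
      refine Set.eq_singleton_iff_unique_mem.mpr ⟨zB, ?_⟩
      intro b hb
      obtain ⟨r', hr', rfl⟩ := hBI hb
      have : r' ∈ C := ⟨hr', hb⟩
      have : r' = z := by rwa [hC, Set.mem_singleton_iff] at this
      rw [this]; exact (hz t γ).1
    · right
      refine Set.Subset.antisymm hBI ?_
      rintro y ⟨r', hr', rfl⟩
      have : r' ∈ C := by rw [hC]; exact hr'
      exact this.2
  -- HΓI is a nonzero two-sided ideal, hence univ
  have hxHI : mul h α (mul t γ r) ∈ gprod mul H I := ⟨h, hh, α, mul t γ r, hItr, rfl⟩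
  have key : IsTwoSidedIdeal mul (gprod mul H I) := by
    refine ⟨⟨⟨_, hxHI⟩, ?_⟩, ⟨⟨_, hxHI⟩, ?_⟩⟩
    · rintro y ⟨s, -, β, w, ⟨h', hh', α', i, hi, rfl⟩, rfl⟩
      exact ⟨mul s β h', hHcl ⟨s, trivial, β, h', hh', rfl⟩, α', i, hi,
        (assoc s h' i β α').symm⟩
    · rintro y ⟨w, ⟨h', hh', α', i, hi, rfl⟩, β, s, -, rfl⟩
      exact ⟨h', hh', α', mul i β s, hIri.2 ⟨i, hi, β, s, trivial, rfl⟩,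
        assoc h' i s α' β⟩
  rcases hzs.2 _ key with hk | hk
  · exfalso
    rw [hk] at hxHI
    exact hxne hxHI
  · refine ⟨I, ⟨hIri, hIne, hImin⟩, ?_, hk⟩
    intro e
    rw [e] at hxHI
    exact hxne hxHI
end

section
/- Let (T, Γ) be a 0-simple Γ-semigroup with zero 0, let H be a 0-least Γ-left ideal of T and I a 0-least Γ-right ideal of T with HΓI ≠ {0}. Then IΓH = I ∩ H. -/
section AuxLemmas

set_option linter.unusedSectionVars false

variable {T G : Type*} [Nonempty T] [Nonempty G]

lemma mem_gprod_sl {mul : T → G → T → T} {b x : T} :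
    x ∈ gprod mul {b} Set.univ ↔ ∃ (γ : G) (t : T), x = mul b γ t := by
  constructor
  · rintro ⟨a, ha, γ, t, -, hx⟩
    exact ⟨γ, t, by rw [hx, show a = b from ha]⟩
  · rintro ⟨γ, t, rfl⟩
    exact ⟨b, rfl, γ, t, trivial, rfl⟩

lemma mem_gprod_sr {mul : T → G → T → T} {b x : T} :
    x ∈ gprod mul Set.univ {b} ↔ ∃ (t : T) (γ : G), x = mul t γ b := by
  constructor
  · rintro ⟨t, -, γ, a, ha, hx⟩
    exact ⟨t, γ, by rw [hx, show a = b from ha]⟩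
  · rintro ⟨t, γ, rfl⟩
    exact ⟨t, trivial, γ, b, rfl, rfl⟩

lemma zero_mem_right_aux (mul : T → G → T → T) (z : T) (hz : IsZero mul z)
    {I : Set T} (hI : IsRightIdeal mul I) : z ∈ I := by
  obtain ⟨i, hi⟩ := hI.1
  obtain ⟨γ⟩ := (inferInstance : Nonempty G)
  have h : mul i γ z ∈ I := hI.2 ⟨i, hi, γ, z, trivial, rfl⟩
  rwa [(hz i γ).1] at h

lemma zero_mem_left_aux (mul : T → G → T → T) (z : T) (hz : IsZero mul z)
    {H : Set T} (hH : IsLeftIdeal mul H) : z ∈ H := by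
  obtain ⟨i, hi⟩ := hH.1
  obtain ⟨γ⟩ := (inferInstance : Nonempty G)
  have h : mul z γ i ∈ H := hH.2 ⟨z, trivial, γ, i, hi, rfl⟩
  rwa [(hz i γ).2] at h

/-- For a nonzero element `b` of a 0-least right ideal `I` of a 0-simple
Γ-semigroup, `bΓT = I`. -/
lemma right_gen_aux (mul : T → G → T → T)
    (assoc : ∀ (e f g : T) (α β : G), mul (mul e α f) β g = mul e α (mul f β g))
    (z : T) (hz : IsZero mul z) (hzs : IsZeroSimple mul z)
    {I : Set T} (hI : IsZeroLeastRightIdeal mul z I)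
    {b : T} (hb : b ∈ I) (hbz : b ≠ z) : gprod mul {b} Set.univ = I := by
  obtain ⟨γ0⟩ := (inferInstance : Nonempty G)
  have hBr : IsRightIdeal mul (gprod mul {b} Set.univ) := by
    refine ⟨⟨mul b γ0 z, mem_gprod_sl.mpr ⟨γ0, z, rfl⟩⟩, ?_⟩
    rintro x ⟨y, hy, δ, s, -, rfl⟩
    obtain ⟨γ, t, rfl⟩ := mem_gprod_sl.mp hy
    exact mem_gprod_sl.mpr ⟨γ, mul t δ s, assoc b t s γ δ⟩
  have hBI : gprod mul {b} Set.univ ⊆ I := by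
    intro x hx
    obtain ⟨γ, t, rfl⟩ := mem_gprod_sl.mp hx
    exact hI.1.2 ⟨b, hb, γ, t, trivial, rfl⟩
  rcases hI.2.2 _ hBr hBI with hB | hB
  · exfalso
    have hb0 : ∀ (γ : G) (t : T), mul b γ t = z := by
      intro γ t
      have h : mul b γ t ∈ gprod mul {b} Set.univ := mem_gprod_sl.mpr ⟨γ, t, rfl⟩
      rw [hB] at h
      exact h
    -- C = {b} ∪ {z} ∪ TΓ{b} is a two-sided ideal
    have hCtwo : IsTwoSidedIdeal mul
        (insert b (insert z (gprod mul Set.univ ({b} : Set T)))) := by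
      refine ⟨⟨⟨b, Or.inl rfl⟩, ?_⟩, ⟨⟨b, Or.inl rfl⟩, ?_⟩⟩
      · rintro x ⟨t, -, γ, c, hc, rfl⟩
        rcases hc with hc | hc | hc
        · rw [show c = b from hc]
          exact Or.inr (Or.inr (mem_gprod_sr.mpr ⟨t, γ, rfl⟩))
        · rw [show c = z from hc]
          exact Or.inr (Or.inl ((hz t γ).1))
        · obtain ⟨s, δ, rfl⟩ := mem_gprod_sr.mp hc
          exact Or.inr (Or.inr (mem_gprod_sr.mpr ⟨mul t γ s, δ, (assoc t s b γ δ).symm⟩))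
      · rintro x ⟨c, hc, γ, t, -, rfl⟩
        rcases hc with hc | hc | hc
        · rw [show c = b from hc]
          exact Or.inr (Or.inl (hb0 γ t))
        · rw [show c = z from hc]
          exact Or.inr (Or.inl ((hz t γ).2))
        · obtain ⟨s, δ, rfl⟩ := mem_gprod_sr.mp hc
          refine Or.inr (Or.inl ?_)
          rw [assoc, hb0, (hz s δ).1]
    rcases hzs.2 _ hCtwo with hCz | hCu
    · apply hbz
      have h : b ∈ ({z} : Set T) := by rw [← hCz]; exact Or.inl rfl
      exact h
    · -- then TΓT = {z}, contradiction
      apply hzs.1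
      apply Set.eq_singleton_iff_unique_mem.mpr
      refine ⟨⟨z, trivial, γ0, z, trivial, ((hz z γ0).1).symm⟩, ?_⟩
      rintro x ⟨s, -, γ, t, -, rfl⟩
      have hs : s ∈ insert b (insert z (gprod mul Set.univ ({b} : Set T))) := by
        rw [hCu]; trivial
      rcases hs with hs | hs | hs
      · rw [show s = b from hs]; exact hb0 γ t
      · rw [show s = z from hs]; exact (hz t γ).2
      · obtain ⟨u, δ, rfl⟩ := mem_gprod_sr.mp hs
        rw [assoc, hb0, (hz u δ).1]
  · exact hB

/-- For a nonzero element `b` of a 0-least left ideal `H` of a 0-simple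
Γ-semigroup, `TΓb = H`. -/
lemma left_gen_aux (mul : T → G → T → T)
    (assoc : ∀ (e f g : T) (α β : G), mul (mul e α f) β g = mul e α (mul f β g))
    (z : T) (hz : IsZero mul z) (hzs : IsZeroSimple mul z)
    {H : Set T} (hH : IsZeroLeastLeftIdeal mul z H)
    {b : T} (hb : b ∈ H) (hbz : b ≠ z) : gprod mul Set.univ {b} = H := by
  obtain ⟨γ0⟩ := (inferInstance : Nonempty G)
  have hBl : IsLeftIdeal mul (gprod mul Set.univ {b}) := by
    refine ⟨⟨mul z γ0 b, mem_gprod_sr.mpr ⟨z, γ0, rfl⟩⟩, ?_⟩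
    rintro x ⟨t, -, δ, y, hy, rfl⟩
    obtain ⟨s, γ, rfl⟩ := mem_gprod_sr.mp hy
    exact mem_gprod_sr.mpr ⟨mul t δ s, γ, (assoc t s b δ γ).symm⟩
  have hBH : gprod mul Set.univ {b} ⊆ H := by
    intro x hx
    obtain ⟨t, γ, rfl⟩ := mem_gprod_sr.mp hx
    exact hH.1.2 ⟨t, trivial, γ, b, hb, rfl⟩
  rcases hH.2.2 _ hBl hBH with hB | hB
  · exfalso
    have hb0 : ∀ (t : T) (γ : G), mul t γ b = z := by
      intro t γ
      have h : mul t γ b ∈ gprod mul Set.univ {b} := mem_gprod_sr.mpr ⟨t, γ, rfl⟩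
      rw [hB] at h
      exact h
    -- C = {b} ∪ {z} ∪ {b}ΓT is a two-sided ideal
    have hCtwo : IsTwoSidedIdeal mul
        (insert b (insert z (gprod mul ({b} : Set T) Set.univ))) := by
      refine ⟨⟨⟨b, Or.inl rfl⟩, ?_⟩, ⟨⟨b, Or.inl rfl⟩, ?_⟩⟩
      · rintro x ⟨t, -, γ, c, hc, rfl⟩
        rcases hc with hc | hc | hc
        · rw [show c = b from hc]
          exact Or.inr (Or.inl (hb0 t γ))
        · rw [show c = z from hc]
          exact Or.inr (Or.inl ((hz t γ).1))
        · obtain ⟨δ, s, rfl⟩ := mem_gprod_sl.mp hc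
          refine Or.inr (Or.inl ?_)
          rw [← assoc, hb0, (hz s δ).2]
      · rintro x ⟨c, hc, γ, t, -, rfl⟩
        rcases hc with hc | hc | hc
        · rw [show c = b from hc]
          exact Or.inr (Or.inr (mem_gprod_sl.mpr ⟨γ, t, rfl⟩))
        · rw [show c = z from hc]
          exact Or.inr (Or.inl ((hz t γ).2))
        · obtain ⟨δ, s, rfl⟩ := mem_gprod_sl.mp hc
          exact Or.inr (Or.inr (mem_gprod_sl.mpr ⟨δ, mul s γ t, assoc b s t δ γ⟩))
    rcases hzs.2 _ hCtwo with hCz | hCu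
    · apply hbz
      have h : b ∈ ({z} : Set T) := by rw [← hCz]; exact Or.inl rfl
      exact h
    · apply hzs.1
      apply Set.eq_singleton_iff_unique_mem.mpr
      refine ⟨⟨z, trivial, γ0, z, trivial, ((hz z γ0).1).symm⟩, ?_⟩
      rintro x ⟨s, -, γ, t, -, rfl⟩
      have ht : t ∈ insert b (insert z (gprod mul ({b} : Set T) Set.univ)) := by
        rw [hCu]; trivial
      rcases ht with ht | ht | ht
      · rw [show t = b from ht]; exact hb0 s γ
      · rw [show t = z from ht]; exact (hz s γ).1
      · obtain ⟨δ, u, rfl⟩ := mem_gprod_sl.mp ht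
        rw [← assoc, hb0, (hz u δ).2]
  · exact hB

end AuxLemmas

theorem IGH_eq_inter {T G : Type*} [Nonempty T] [Nonempty G]
    (mul : T → G → T → T)
    (assoc : ∀ (e f g : T) (α β : G), mul (mul e α f) β g = mul e α (mul f β g))
    (z : T) (hz : IsZero mul z)
    (hzs : IsZeroSimple mul z)
    (H : Set T) (hH : IsZeroLeastLeftIdeal mul z H)
    (I : Set T) (hI : IsZeroLeastRightIdeal mul z I)
    (hHI : gprod mul H I ≠ {z}) :
    gprod mul I H = I ∩ H := by
  obtain ⟨γ0⟩ := (inferInstance : Nonempty G)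
  have hzI : z ∈ I := zero_mem_right_aux mul z hz hI.1
  have hzH : z ∈ H := zero_mem_left_aux mul z hz hH.1
  apply Set.Subset.antisymm
  · rintro x ⟨i, hi, γ, h, hh, rfl⟩
    exact ⟨hI.1.2 ⟨i, hi, γ, h, trivial, rfl⟩, hH.1.2 ⟨i, trivial, γ, h, hh, rfl⟩⟩
  -- reverse inclusion
  -- Step 1: HΓI is a two-sided ideal, hence equals T
  have hHItwo : IsTwoSidedIdeal mul (gprod mul H I) := by
    constructor
    · refine ⟨⟨mul z γ0 z, z, hzH, γ0, z, hzI, rfl⟩, ?_⟩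
      rintro x ⟨t, -, δ, y, ⟨h, hh, γ, i, hi, rfl⟩, rfl⟩
      exact ⟨mul t δ h, hH.1.2 ⟨t, trivial, δ, h, hh, rfl⟩, γ, i, hi,
        (assoc t h i δ γ).symm⟩
    · refine ⟨⟨mul z γ0 z, z, hzH, γ0, z, hzI, rfl⟩, ?_⟩
      rintro x ⟨y, ⟨h, hh, γ, i, hi, rfl⟩, δ, t, -, rfl⟩
      exact ⟨h, hh, γ, mul i δ t, hI.1.2 ⟨i, hi, δ, t, trivial, rfl⟩,
        assoc h i t γ δ⟩
  have hHIT : gprod mul H I = Set.univ := (hzs.2 _ hHItwo).resolve_left hHI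
  -- Step 2: IΓH ≠ {z}, get a nonzero c ∈ IΓH
  have hc : ∃ c ∈ gprod mul I H, c ≠ z := by
    by_contra hcon
    push_neg at hcon
    apply hzs.1
    apply Set.eq_singleton_iff_unique_mem.mpr
    refine ⟨⟨z, trivial, γ0, z, trivial, ((hz z γ0).1).symm⟩, ?_⟩
    rintro x ⟨s, -, α, t, -, rfl⟩
    have hs : s ∈ gprod mul H I := by rw [hHIT]; trivial
    have ht : t ∈ gprod mul H I := by rw [hHIT]; trivial
    obtain ⟨h, hh, β, i, hi, rfl⟩ := hs
    obtain ⟨h', hh', β', i', hi', rfl⟩ := ht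
    have hih : mul i α h' = z := hcon _ ⟨i, hi, α, h', hh', rfl⟩
    rw [assoc, ← assoc i h' i' α β', hih, (hz i' β').2, (hz h β).1]
  obtain ⟨c, hcIH, hcz⟩ := hc
  have hcI : c ∈ I := by
    obtain ⟨i, hi, γ, h, hh, rfl⟩ := hcIH
    exact hI.1.2 ⟨i, hi, γ, h, trivial, rfl⟩
  have hcH : c ∈ H := by
    obtain ⟨i, hi, γ, h, hh, rfl⟩ := hcIH
    exact hH.1.2 ⟨i, trivial, γ, h, hh, rfl⟩
  -- Step 3: find a nonzero g ∈ IΓH of the form cγuδc; in fact we only record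
  -- the existence of a nonzero g in IΓH that also satisfies g = (gγ'v)δ'g
  have hgex : ∃ g, g ≠ z ∧ g ∈ gprod mul I H := by
    have hg : ∃ (u : T) (γ δ : G), mul (mul c γ u) δ c ≠ z := by
      by_contra hcon
      push_neg at hcon
      apply hcz
      obtain ⟨i, hi, γ, h, hh, hceq⟩ := hcIH
      have hiI : i ∈ gprod mul {c} Set.univ := by
        rw [right_gen_aux mul assoc z hz hzs hI hcI hcz]; exact hi
      have hhH : h ∈ gprod mul Set.univ {c} := by
        rw [left_gen_aux mul assoc z hz hzs hH hcH hcz]; exact hh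
      obtain ⟨γ1, t, rfl⟩ := mem_gprod_sl.mp hiI
      obtain ⟨t', γ2, rfl⟩ := mem_gprod_sr.mp hhH
      rw [hceq, assoc, ← assoc t t' c γ γ2, ← assoc c (mul t γ t') c γ1 γ2, hcon]
    obtain ⟨u, γu, δu, hgz⟩ := hg
    exact ⟨mul (mul c γu u) δu c, hgz,
      ⟨mul c γu u, hI.1.2 ⟨c, hcI, γu, u, trivial, rfl⟩, δu, c, hcH, rfl⟩⟩
  obtain ⟨g, hgz, hgIH⟩ := hgex
  have hgI : g ∈ I := by
    obtain ⟨i, hi, γ, h, hh, hgeq⟩ := hgIH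
    rw [hgeq]; exact hI.1.2 ⟨i, hi, γ, h, trivial, rfl⟩
  have hgH : g ∈ H := by
    obtain ⟨i, hi, γ, h, hh, hgeq⟩ := hgIH
    rw [hgeq]; exact hH.1.2 ⟨i, trivial, γ, h, hh, rfl⟩
  -- Step 4: g = (g γ' v) δ' g for some v, γ', δ'
  have hsand : ∃ (v : T) (γ' δ' : G), g = mul (mul g γ' v) δ' g := by
    obtain ⟨i, hi, κ, h, hh, hgeq⟩ := hgIH
    have hiI : i ∈ gprod mul {g} Set.univ := by
      rw [right_gen_aux mul assoc z hz hzs hI hgI hgz]; exact hi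
    have hhH : h ∈ gprod mul Set.univ {g} := by
      rw [left_gen_aux mul assoc z hz hzs hH hgH hgz]; exact hh
    obtain ⟨γ1, t, rfl⟩ := mem_gprod_sl.mp hiI
    obtain ⟨t', γ2, rfl⟩ := mem_gprod_sr.mp hhH
    refine ⟨mul t κ t', γ1, γ2, hgeq.trans ?_⟩
    rw [assoc g t (mul t' γ2 g) γ1 κ, ← assoc t t' g κ γ2,
      ← assoc g (mul t κ t') g γ1 γ2]
  obtain ⟨v, γ', δ', hge⟩ := hsand
  have hee : mul (mul g γ' v) δ' (mul g γ' v) = mul g γ' v := by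
    rw [← assoc (mul g γ' v) g v δ' γ', ← hge]
  have heI : mul g γ' v ∈ I := hI.1.2 ⟨g, hgI, γ', v, trivial, rfl⟩
  have hez : mul g γ' v ≠ z := by
    intro h0
    apply hgz
    rw [hge, h0, (hz g δ').2]
  -- Step 5: every a ∈ I ∩ H equals (gγ'v) δ' a = g γ' (v δ' a) ∈ IΓH
  rintro a ⟨haI, haH⟩
  have haE : a ∈ gprod mul {mul g γ' v} Set.univ := by
    rw [right_gen_aux mul assoc z hz hzs hI heI hez]; exact haI
  obtain ⟨σ, w, haeq⟩ := mem_gprod_sl.mp haE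
  have hea : mul (mul g γ' v) δ' a = a := by
    rw [haeq, ← assoc, hee]
  refine ⟨g, hgI, γ', mul v δ' a, hH.1.2 ⟨v, trivial, δ', a, haH, rfl⟩, ?_⟩
  rw [← assoc g v a γ' δ']
  exact hea.symm
end

section
/- Let (T, Γ) be a completely 0-simple Γ-semigroup and let e be a primitive idempotent of T. Then H = TΓe is a 0-least Γ-left ideal of T and I = eΓT is a 0-least Γ-right ideal of T. -/
section GammaAux

variable {T G : Type*}

private lemma gp_mem {mul : T → G → T → T} {A B : Set T} {a b x : T} {γ : G}
    (ha : a ∈ A) (hb : b ∈ B) (hx : x = mul a γ b) : x ∈ gprod mul A B :=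
  ⟨a, ha, γ, b, hb, hx⟩

private lemma gp_sing_right {mul : T → G → T → T} {A : Set T} {a x : T}
    (h : x ∈ gprod mul A {a}) : ∃ t ∈ A, ∃ γ : G, x = mul t γ a := by
  obtain ⟨t, ht, γ, b, hb, hx⟩ := h
  exact ⟨t, ht, γ, by rw [hx, show b = a from hb]⟩

private lemma gp_sing_left {mul : T → G → T → T} {A : Set T} {a x : T}
    (h : x ∈ gprod mul {a} A) : ∃ γ : G, ∃ t ∈ A, x = mul a γ t := by
  obtain ⟨b, hb, γ, t, ht, hx⟩ := h
  exact ⟨γ, t, ht, by rw [hx, show b = a from hb]⟩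

private lemma gp_univ (mul : T → G → T → T)
    (assoc : ∀ (e f g : T) (α β : G), mul (mul e α f) β g = mul e α (mul f β g))
    (z : T) (hz : IsZero mul z) (p : G) (hne : gprod mul (Set.univ : Set T) Set.univ ≠ {z})
    (hmin : ∀ B : Set T, IsTwoSidedIdeal mul B → B = {z} ∨ B = Set.univ) :
    gprod mul (Set.univ : Set T) Set.univ = Set.univ := by
  have hideal : IsTwoSidedIdeal mul (gprod mul (Set.univ : Set T) Set.univ) := by
    refine ⟨⟨⟨z, gp_mem trivial trivial ((hz z p).1).symm⟩, ?_⟩,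
      ⟨z, gp_mem trivial trivial ((hz z p).1).symm⟩, ?_⟩
    · rintro x ⟨t, -, γ, w, ⟨aa, -, δ, bb, -, rfl⟩, rfl⟩
      exact gp_mem trivial trivial (assoc t aa bb γ δ).symm
    · rintro x ⟨w, ⟨aa, -, δ, bb, -, rfl⟩, γ, t, -, rfl⟩
      exact gp_mem trivial trivial (assoc aa bb t δ γ)
  rcases hmin _ hideal with h | h
  · exact absurd h hne
  · exact h

private lemma gp_L2 (mul : T → G → T → T)
    (assoc : ∀ (e f g : T) (α β : G), mul (mul e α f) β g = mul e α (mul f β g))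
    (z : T) (hz : IsZero mul z) (p : G)
    (hne : gprod mul (Set.univ : Set T) Set.univ ≠ {z})
    (hmin : ∀ B : Set T, IsTwoSidedIdeal mul B → B = {z} ∨ B = Set.univ)
    (a : T) (ha : a ≠ z) :
    gprod mul (gprod mul Set.univ {a}) Set.univ = Set.univ := by
  have hT := gp_univ mul assoc z hz p hne hmin
  -- the two-sided ideal generated by a is everything
  have hGT : IsTwoSidedIdeal mul (GenTwo mul a) := by
    refine ⟨⟨⟨a, Or.inl (Or.inl (Or.inl rfl))⟩, ?_⟩, ⟨a, Or.inl (Or.inl (Or.inl rfl))⟩, ?_⟩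
    · rintro x ⟨t, -, γ, w, hw, rfl⟩
      rcases hw with ((hw | hw) | hw) | hw
      · rw [show w = a from hw]
        exact Or.inl (Or.inl (Or.inr ⟨t, trivial, γ, a, rfl, rfl⟩))
      · obtain ⟨s, -, δ, rfl⟩ := gp_sing_right hw
        exact Or.inl (Or.inl (Or.inr ⟨mul t γ s, trivial, δ, a, rfl, (assoc t s a γ δ).symm⟩))
      · obtain ⟨δ, s, -, rfl⟩ := gp_sing_left hw
        exact Or.inr ⟨mul t γ a, ⟨t, trivial, γ, a, rfl, rfl⟩, δ, s, trivial,
          (assoc t a s γ δ).symm⟩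
      · obtain ⟨w1, hw1, ε, v, -, rfl⟩ := hw
        obtain ⟨s, -, δ, rfl⟩ := gp_sing_right hw1
        exact Or.inr ⟨mul (mul t γ s) δ a, ⟨mul t γ s, trivial, δ, a, rfl, rfl⟩, ε, v, trivial,
          by simp only [assoc]⟩
    · rintro x ⟨w, hw, γ, t, -, rfl⟩
      rcases hw with ((hw | hw) | hw) | hw
      · rw [show w = a from hw]
        exact Or.inl (Or.inr ⟨a, rfl, γ, t, trivial, rfl⟩)
      · obtain ⟨s, -, δ, rfl⟩ := gp_sing_right hw
        exact Or.inr ⟨mul s δ a, ⟨s, trivial, δ, a, rfl, rfl⟩, γ, t, trivial, rfl⟩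
      · obtain ⟨δ, s, -, rfl⟩ := gp_sing_left hw
        exact Or.inl (Or.inr ⟨a, rfl, δ, mul s γ t, trivial, (assoc a s t δ γ)⟩)
      · obtain ⟨w1, hw1, ε, v, -, rfl⟩ := hw
        obtain ⟨s, -, δ, rfl⟩ := gp_sing_right hw1
        exact Or.inr ⟨mul s δ a, ⟨s, trivial, δ, a, rfl, rfl⟩, ε, mul v γ t, trivial,
          by simp only [assoc]⟩
  have hGenU : GenTwo mul a = Set.univ := by
    rcases hmin _ hGT with h | h
    · exfalso
      have haG : a ∈ GenTwo mul a := Or.inl (Or.inl (Or.inl rfl))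
      rw [h] at haG
      exact ha haG
    · exact h
  -- S = TΓaΓT is a two-sided ideal
  have hSideal : IsTwoSidedIdeal mul (gprod mul (gprod mul Set.univ {a}) Set.univ) := by
    have hzS : z ∈ gprod mul (gprod mul Set.univ {a}) Set.univ :=
      ⟨mul z p a, ⟨z, trivial, p, a, rfl, rfl⟩, p, z, trivial,
        by rw [(hz a p).2, (hz z p).1]⟩
    refine ⟨⟨⟨z, hzS⟩, ?_⟩, ⟨z, hzS⟩, ?_⟩
    · rintro x ⟨t, -, γ, w, hw, rfl⟩
      obtain ⟨w1, hw1, β, y, -, rfl⟩ := hw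
      obtain ⟨s, -, δ, rfl⟩ := gp_sing_right hw1
      exact ⟨mul (mul t γ s) δ a, ⟨mul t γ s, trivial, δ, a, rfl, rfl⟩, β, y, trivial,
        by simp only [assoc]⟩
    · rintro x ⟨w, hw, γ, t, -, rfl⟩
      obtain ⟨w1, hw1, β, y, -, rfl⟩ := hw
      obtain ⟨s, -, δ, rfl⟩ := gp_sing_right hw1
      exact ⟨mul s δ a, ⟨s, trivial, δ, a, rfl, rfl⟩, β, mul y γ t, trivial,
        by simp only [assoc]⟩
  rcases hmin _ hSideal with h | h
  · exfalso
    apply hne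
    have hall : ∀ t : T, t = z := by
      intro t
      have ht : t ∈ gprod mul (Set.univ : Set T) Set.univ := by rw [hT]; trivial
      obtain ⟨u, -, α, v, -, htv⟩ := ht
      have hu : u ∈ gprod mul (Set.univ : Set T) Set.univ := by rw [hT]; trivial
      obtain ⟨u1, -, γ, u2, -, hu12⟩ := hu
      subst htv; subst hu12
      have hu2 : u2 ∈ GenTwo mul a := by rw [hGenU]; trivial
      rcases hu2 with ((hu2 | hu2) | hu2) | hu2
      · rw [show u2 = a from hu2]
        have hmem : mul (mul u1 γ a) α v ∈ gprod mul (gprod mul Set.univ {a}) Set.univ :=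
          ⟨mul u1 γ a, ⟨u1, trivial, γ, a, rfl, rfl⟩, α, v, trivial, rfl⟩
        rw [h] at hmem
        exact Set.mem_singleton_iff.mp hmem
      · obtain ⟨s, -, δ, rfl⟩ := gp_sing_right hu2
        have hmem : mul (mul (mul u1 γ s) δ a) α v ∈
            gprod mul (gprod mul Set.univ {a}) Set.univ :=
          ⟨mul (mul u1 γ s) δ a, ⟨mul u1 γ s, trivial, δ, a, rfl, rfl⟩, α, v, trivial, rfl⟩
        rw [h] at hmem
        have heq : mul (mul u1 γ (mul s δ a)) α v = mul (mul (mul u1 γ s) δ a) α v := by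
          simp only [assoc]
        rw [heq]
        exact Set.mem_singleton_iff.mp hmem
      · obtain ⟨δ, s, -, rfl⟩ := gp_sing_left hu2
        have hmem : mul (mul u1 γ a) δ (mul s α v) ∈
            gprod mul (gprod mul Set.univ {a}) Set.univ :=
          ⟨mul u1 γ a, ⟨u1, trivial, γ, a, rfl, rfl⟩, δ, mul s α v, trivial, rfl⟩
        rw [h] at hmem
        have heq : mul (mul u1 γ (mul a δ s)) α v = mul (mul u1 γ a) δ (mul s α v) := by
          simp only [assoc]
        rw [heq]
        exact Set.mem_singleton_iff.mp hmem
      · obtain ⟨w1, hw1, ε, v2, -, rfl⟩ := hu2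
        obtain ⟨s, -, δ, rfl⟩ := gp_sing_right hw1
        have hmem : mul (mul (mul u1 γ s) δ a) ε (mul v2 α v) ∈
            gprod mul (gprod mul Set.univ {a}) Set.univ :=
          ⟨mul (mul u1 γ s) δ a, ⟨mul u1 γ s, trivial, δ, a, rfl, rfl⟩, ε, mul v2 α v,
            trivial, rfl⟩
        rw [h] at hmem
        have heq : mul (mul u1 γ (mul (mul s δ a) ε v2)) α v
            = mul (mul (mul u1 γ s) δ a) ε (mul v2 α v) := by simp only [assoc]
        rw [heq]
        exact Set.mem_singleton_iff.mp hmem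
    refine Set.eq_singleton_iff_unique_mem.mpr ⟨?_, fun x _ => hall x⟩
    exact ⟨z, trivial, p, z, trivial, ((hz z p).1).symm⟩
  · exact h

private lemma lemA_core (mul : T → G → T → T)
    (assoc : ∀ (e f g : T) (α β : G), mul (mul e α f) β g = mul e α (mul f β g))
    (z : T) (hz : IsZero mul z) (e : T) (p : G) (hez : e ≠ z)
    (hprim : ∀ f : T, f ≠ z → IsIdempotent mul f → IdemLe mul f e → f = e)
    (c X Y : T) (hec : mul e p c = c) (hce : mul c p e = c) (hcz : c ≠ z)
    (key : mul X p (mul c p Y) = e) (heX : mul e p X = X) (hXe : mul X p e = X)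
    (heY : mul e p Y = Y) :
    ∃ W : T, mul W p c = e ∧ mul c p W = e := by
  have step : mul X p (mul c p (mul Y p X)) = X := by
    rw [← assoc c Y X p p, ← assoc X (mul c p Y) X p p, key, heX]
  have hcW : mul c p (mul Y p X) = e := by
    apply hprim
    · intro hcontra
      have hXz : X = z := by rw [← step, hcontra, (hz X p).1]
      rw [hXz, (hz (mul c p Y) p).2] at key
      exact hez key.symm
    · exact ⟨p, by rw [assoc c (mul Y p X) _ p p, assoc Y X _ p p, step]⟩
    · refine ⟨p, p, ?_, ?_⟩
      · rw [assoc c (mul Y p X) e p p, assoc Y X e p p, hXe]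
      · rw [← assoc e c (mul Y p X) p p, hec]
  have heW : mul e p (mul Y p X) = mul Y p X := by rw [← assoc e Y X p p, heY]
  have step' : mul c p (mul (mul Y p X) p c) = c := by
    rw [← assoc c (mul Y p X) c p p, hcW, hec]
  have hWce : mul (mul Y p X) p c = e := by
    apply hprim
    · intro hcontra
      apply hcz
      rw [← step', hcontra, (hz c p).1]
    · exact ⟨p, by rw [assoc (mul Y p X) c _ p p, step']⟩
    · refine ⟨p, p, ?_, ?_⟩
      · rw [assoc (mul Y p X) c e p p, hce]
      · rw [← assoc e (mul Y p X) c p p, heW]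
  exact ⟨mul Y p X, hWce, hcW⟩

private lemma lemA (mul : T → G → T → T)
    (assoc : ∀ (e f g : T) (α β : G), mul (mul e α f) β g = mul e α (mul f β g))
    (z : T) (hz : IsZero mul z)
    (hne : gprod mul (Set.univ : Set T) Set.univ ≠ {z})
    (hmin : ∀ B : Set T, IsTwoSidedIdeal mul B → B = {z} ∨ B = Set.univ)
    (e : T) (p : G) (hep : mul e p e = e) (hez : e ≠ z)
    (hprim : ∀ f : T, f ≠ z → IsIdempotent mul f → IdemLe mul f e → f = e)
    (c : T) (hec : mul e p c = c) (hce : mul c p e = c) (hcz : c ≠ z) :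
    ∃ W : T, mul W p c = e ∧ mul c p W = e := by
  have hL2 := gp_L2 mul assoc z hz p hne hmin c hcz
  have he_mem : e ∈ gprod mul (gprod mul Set.univ {c}) Set.univ := by rw [hL2]; trivial
  obtain ⟨w1, hw1, β, y, -, hE⟩ := he_mem
  obtain ⟨x, -, α, rfl⟩ := gp_sing_right hw1
  have heX : mul e p (mul e p (mul x α e)) = mul e p (mul x α e) := by
    rw [← assoc e e (mul x α e) p p, hep]
  have hXe : mul (mul e p (mul x α e)) p e = mul e p (mul x α e) := by
    rw [assoc e (mul x α e) e p p, assoc x e e α p, hep]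
  have heY : mul e p (mul (mul e β y) p e) = mul (mul e β y) p e := by
    rw [← assoc e (mul e β y) e p p, ← assoc e e y p β, hep]
  have key : mul (mul e p (mul x α e)) p (mul c p (mul (mul e β y) p e)) = e := by
    rw [assoc e (mul x α e) (mul c p (mul (mul e β y) p e)) p p,
      assoc x e (mul c p (mul (mul e β y) p e)) α p,
      ← assoc e c (mul (mul e β y) p e) p p, hec,
      ← assoc c (mul e β y) e p p, ← assoc c e y p β, hce,
      ← assoc x (mul c β y) e α p, ← assoc x c y α β, ← hE, hep, hep]
  exact lemA_core mul assoc z hz e p hez hprim c (mul e p (mul x α e))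
    (mul (mul e β y) p e) hec hce hcz key heX hXe heY

end GammaAux

theorem primitiveIdempotent_gives_zeroLeast_ideals {T G : Type*} [Nonempty T] [Nonempty G]
    (mul : T → G → T → T)
    (assoc : ∀ (e f g : T) (α β : G), mul (mul e α f) β g = mul e α (mul f β g))
    (z : T) (hz : IsZero mul z)
    (hcs : IsCompletelyZeroSimple mul z)
    (e : T) (he : IsPrimitiveIdempotent mul z e) :
    IsZeroLeastLeftIdeal mul z (gprod mul Set.univ {e}) ∧
      IsZeroLeastRightIdeal mul z (gprod mul {e} Set.univ) := by
  obtain ⟨⟨hne, hmin⟩, -⟩ := hcs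
  obtain ⟨hez, ⟨p, hep⟩, hprim⟩ := he
  constructor
  · -- left ideal part
    refine ⟨⟨⟨e, gp_mem trivial rfl hep.symm⟩, ?_⟩, ?_, ?_⟩
    · rintro x ⟨t, -, γ, w, hw, rfl⟩
      obtain ⟨s, -, δ, rfl⟩ := gp_sing_right hw
      exact gp_mem trivial rfl (assoc t s e γ δ).symm
    · intro hcontra
      have hmem : e ∈ gprod mul (Set.univ : Set T) {e} := gp_mem trivial rfl hep.symm
      rw [hcontra] at hmem
      exact hez hmem
    · intro B hB hBH
      by_cases hBz : B ⊆ {z}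
      · left
        refine Set.Subset.antisymm hBz ?_
        intro w hw
        obtain ⟨b0, hb0⟩ := hB.1
        have hb0z : b0 = z := hBz hb0
        have hwz : w = z := hw
        rw [hwz, ← hb0z]
        exact hb0
      · right
        rw [Set.not_subset] at hBz
        obtain ⟨b, hbB, hbz⟩ := hBz
        have hbz : b ≠ z := hbz
        obtain ⟨t, -, γ, hbeq⟩ := gp_sing_right (hBH hbB)
        have hbe : mul b p e = b := by rw [hbeq, assoc t e e γ p, hep]
        have hL2b := gp_L2 mul assoc z hz p hne hmin b hbz
        have he_mem : e ∈ gprod mul (gprod mul Set.univ {b}) Set.univ := by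
          rw [hL2b]; trivial
        obtain ⟨w1, hw1, β, y, -, hE⟩ := he_mem
        obtain ⟨x, -, α, rfl⟩ := gp_sing_right hw1
        have hE' : mul (mul (mul e p x) α b) β y = e := by
          rw [assoc e x b p α, assoc e (mul x α b) y p β, ← hE, hep]
        have hec_c : mul e p (mul (mul e p x) α b) = mul (mul e p x) α b := by
          rw [← assoc e (mul e p x) b p α, ← assoc e e x p p, hep]
        have hce_c : mul (mul (mul e p x) α b) p e = mul (mul e p x) α b := by
          rw [assoc (mul e p x) b e α p, hbe]
        have hcz_c : mul (mul e p x) α b ≠ z := by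
          intro hcontra
          have h2 : mul (mul (mul e p x) α b) β (mul y p e) = e := by
            rw [← assoc (mul (mul e p x) α b) y e β p, hE', hep]
          rw [hcontra, (hz (mul y p e) β).2] at h2
          exact hez h2.symm
        obtain ⟨W, hWc, -⟩ := lemA mul assoc z hz hne hmin e p hep hez hprim
          (mul (mul e p x) α b) hec_c hce_c hcz_c
        have heB : e ∈ B := by
          apply hB.2
          exact gp_mem trivial hbB (show e = mul (mul W p (mul e p x)) α b by
            rw [assoc W (mul e p x) b p α]; exact hWc.symm)
        refine Set.Subset.antisymm hBH ?_
        intro w hw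
        obtain ⟨t2, -, γ2, rfl⟩ := gp_sing_right hw
        exact hB.2 (gp_mem trivial heB rfl)
  · -- right ideal part
    refine ⟨⟨⟨e, gp_mem rfl trivial hep.symm⟩, ?_⟩, ?_, ?_⟩
    · rintro x ⟨w, hw, γ, t, -, rfl⟩
      obtain ⟨δ, s, -, rfl⟩ := gp_sing_left hw
      exact gp_mem rfl trivial (assoc e s t δ γ)
    · intro hcontra
      have hmem : e ∈ gprod mul {e} (Set.univ : Set T) := gp_mem rfl trivial hep.symm
      rw [hcontra] at hmem
      exact hez hmem
    · intro B hB hBH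
      by_cases hBz : B ⊆ {z}
      · left
        refine Set.Subset.antisymm hBz ?_
        intro w hw
        obtain ⟨b0, hb0⟩ := hB.1
        have hb0z : b0 = z := hBz hb0
        have hwz : w = z := hw
        rw [hwz, ← hb0z]
        exact hb0
      · right
        rw [Set.not_subset] at hBz
        obtain ⟨b, hbB, hbz⟩ := hBz
        have hbz : b ≠ z := hbz
        obtain ⟨γ, t, -, hbeq⟩ := gp_sing_left (hBH hbB)
        have heb : mul e p b = b := by rw [hbeq, ← assoc e e t p γ, hep]
        have hL2b := gp_L2 mul assoc z hz p hne hmin b hbz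
        have he_mem : e ∈ gprod mul (gprod mul Set.univ {b}) Set.univ := by
          rw [hL2b]; trivial
        obtain ⟨w1, hw1, β, y, -, hE⟩ := he_mem
        obtain ⟨x, -, α, rfl⟩ := gp_sing_right hw1
        have hec_c : mul e p (mul b β (mul y p e)) = mul b β (mul y p e) := by
          rw [← assoc e b (mul y p e) p β, heb]
        have hce_c : mul (mul b β (mul y p e)) p e = mul b β (mul y p e) := by
          rw [assoc b (mul y p e) e β p, assoc y e e p p, hep]
        have h2 : mul (mul e p x) α (mul b β (mul y p e)) = e := by
          rw [← assoc b y e β p, ← assoc (mul e p x) (mul b β y) e α p,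
            assoc e x (mul b β y) p α, ← assoc x b y α β, ← hE, hep, hep]
        have hcz_c : mul b β (mul y p e) ≠ z := by
          intro hcontra
          rw [hcontra, (hz (mul e p x) α).1] at h2
          exact hez h2.symm
        obtain ⟨W, -, hcW⟩ := lemA mul assoc z hz hne hmin e p hep hez hprim
          (mul b β (mul y p e)) hec_c hce_c hcz_c
        have heB : e ∈ B := by
          apply hB.2
          exact gp_mem hbB trivial (show e = mul b β (mul (mul y p e) p W) by
            rw [← assoc b (mul y p e) W β p]; exact hcW.symm)
        refine Set.Subset.antisymm hBH ?_
        intro w hw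
        obtain ⟨γ2, t2, -, rfl⟩ := gp_sing_left hw
        exact hB.2 (gp_mem heB trivial rfl)
end
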